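/- Completeness of the SHIQ tableaux algorithm: if a SHIQ-concept D in negation normal form has a tableau with respect to a role hierarchy R⁺, then the expansion rules can be applied to the initial completion tree for D in such a way that they yield a complete and clash-free completion tree. -/

import Mathlib

/-- SHIQ-roles: role names (indexed by ℕ) and their inverses. -/
inductive Role where
  | atom : ℕ → Role
  | inv  : ℕ → Role
deriving DecidableEq

/-- The function `Inv` on roles: `Inv(R) = R⁻`, `Inv(R⁻) = R`. -/
def Role.Inv : Role → Role
  | .atom r => .inv r
  | .inv r  => .atom r

/-- The underlying role name of a (possibly inverse) role. -/
def Role.name : Role → ℕ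
  | .atom r => r
  | .inv r  => r

/-- Concepts of the SHIQ family (with ⊤ and ⊥ for convenience). -/
inductive DLConcept where
  | top : DLConcept
  | bot : DLConcept
  | atom : ℕ → DLConcept
  | neg : DLConcept → DLConcept
  | and : DLConcept → DLConcept → DLConcept
  | or : DLConcept → DLConcept → DLConcept
  | all : Role → DLConcept → DLConcept
  | ex : Role → DLConcept → DLConcept
  | atleast : ℕ → Role → DLConcept → DLConcept
  | atmost : ℕ → Role → DLConcept → DLConcept
deriving DecidableEq

/-- An interpretation: a (nonempty) domain, a valuation of concept names and
    of role names. -/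
structure Interp where
  Dom : Type
  dom_nonempty : Nonempty Dom
  cI : ℕ → Set Dom
  rI : ℕ → Dom → Dom → Prop

/-- Semantics of (possibly inverse) roles. -/
def Interp.rSem (I : Interp) : Role → I.Dom → I.Dom → Prop
  | .atom r => I.rI r
  | .inv r  => fun x y => I.rI r y x

/-- Semantics of concepts; number restrictions are interpreted by counting
    role successors (via cardinalities, so that infinite sets are handled
    correctly). -/
def Interp.cSem (I : Interp) : DLConcept → Set I.Dom
  | .top => Set.univ
  | .bot => ∅
  | .atom a => I.cI a
  | .neg C => (I.cSem C)ᶜ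
  | .and C D => I.cSem C ∩ I.cSem D
  | .or C D => I.cSem C ∪ I.cSem D
  | .all R C => {x | ∀ y, I.rSem R x y → y ∈ I.cSem C}
  | .ex R C => {x | ∃ y, I.rSem R x y ∧ y ∈ I.cSem C}
  | .atleast n R C => {x | (n : Cardinal) ≤ Cardinal.mk {y // I.rSem R x y ∧ y ∈ I.cSem C}}
  | .atmost n R C => {x | Cardinal.mk {y // I.rSem R x y ∧ y ∈ I.cSem C} ≤ (n : Cardinal)}

/-- `I.Good Rp`: the interpretation interprets every transitive role name
    (member of `Rp`) by a transitive relation. -/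
def Interp.Good (I : Interp) (Rp : Set ℕ) : Prop :=
  ∀ r ∈ Rp, Transitive (I.rI r)

/-- The role hierarchy ⊑* generated by a finite set of role inclusion axioms:
    inverses are added and the transitive-reflexive closure is taken. -/
def SubRole (RIA : List (Role × Role)) : Role → Role → Prop :=
  Relation.ReflTransGen (fun R S => (R, S) ∈ RIA ∨ (R.Inv, S.Inv) ∈ RIA)

/-- `I ⊨ R⁺`: the interpretation satisfies the role hierarchy. -/
def Interp.ModelsRH (I : Interp) (RIA : List (Role × Role)) : Prop :=
  ∀ R S, SubRole RIA R S → ∀ x y, I.rSem R x y → I.rSem S x y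

/-- `Trans(R)`: a (possibly inverse) role is transitive iff its name is in `Rp`. -/
def RTrans (Rp : Set ℕ) : Role → Prop
  | .atom r => r ∈ Rp
  | .inv r  => r ∈ Rp

/-- A role is simple iff it is neither transitive nor has a transitive sub-role. -/
def SimpleRole (Rp : Set ℕ) (RIA : List (Role × Role)) (R : Role) : Prop :=
  ∀ S, SubRole RIA S R → ¬ RTrans Rp S

/-- SHIQ-concepts: number restrictions occur only on simple roles. -/
def DLConcept.IsSHIQ (Rp : Set ℕ) (RIA : List (Role × Role)) : DLConcept → Prop
  | .top | .bot | .atom _ => True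
  | .neg C => C.IsSHIQ Rp RIA
  | .and C D | .or C D => C.IsSHIQ Rp RIA ∧ D.IsSHIQ Rp RIA
  | .all _ C | .ex _ C => C.IsSHIQ Rp RIA
  | .atleast _ R C | .atmost _ R C => SimpleRole Rp RIA R ∧ C.IsSHIQ Rp RIA

/-- Satisfiability of a concept w.r.t. a role hierarchy. -/
def Satisfiable (Rp : Set ℕ) (RIA : List (Role × Role)) (C : DLConcept) : Prop :=
  ∃ I : Interp, I.Good Rp ∧ I.ModelsRH RIA ∧ (I.cSem C).Nonempty

/-- Subsumption of concepts w.r.t. a role hierarchy. -/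
def Subsumes (Rp : Set ℕ) (RIA : List (Role × Role)) (C D : DLConcept) : Prop :=
  ∀ I : Interp, I.Good Rp → I.ModelsRH RIA → I.cSem C ⊆ I.cSem D

/-- Negation normal form: negation occurs only in front of concept names. -/
def DLConcept.IsNNF : DLConcept → Prop
  | .neg (.atom _) => True
  | .neg _ => False
  | .top | .bot | .atom _ => True
  | .and C D | .or C D => C.IsNNF ∧ D.IsNNF
  | .all _ C | .ex _ C => C.IsNNF
  | .atleast _ _ C | .atmost _ _ C => C.IsNNF

/-- `~C`: the negation normal form of `¬C` (for `C` in NNF). -/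
def DLConcept.nnfNeg : DLConcept → DLConcept
  | .top => .bot
  | .bot => .top
  | .atom a => .neg (.atom a)
  | .neg C => C
  | .and C D => .or C.nnfNeg D.nnfNeg
  | .or C D => .and C.nnfNeg D.nnfNeg
  | .all R C => .ex R C.nnfNeg
  | .ex R C => .all R C.nnfNeg
  | .atleast 0 _ _ => .bot
  | .atleast (n+1) R C => .atmost n R C
  | .atmost n R C => .atleast (n + 1) R C

/-- Direct (one-step) subconcepts. -/
inductive DirectSub : DLConcept → DLConcept → Prop
  | neg (C : DLConcept) : DirectSub C (.neg C)
  | andl (C D : DLConcept) : DirectSub C (.and C D)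
  | andr (C D : DLConcept) : DirectSub D (.and C D)
  | orl (C D : DLConcept) : DirectSub C (.or C D)
  | orr (C D : DLConcept) : DirectSub D (.or C D)
  | all (R : Role) (C : DLConcept) : DirectSub C (.all R C)
  | ex (R : Role) (C : DLConcept) : DirectSub C (.ex R C)
  | atleast (n : ℕ) (R : Role) (C : DLConcept) : DirectSub C (.atleast n R C)
  | atmost (n : ℕ) (R : Role) (C : DLConcept) : DirectSub C (.atmost n R C)

/-- `clos(D)`: the smallest set of concepts containing `D` that is closed under
subconcepts and under `~`. -/
inductive InClos (D : DLConcept) : DLConcept → Prop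
  | base : InClos D D
  | sub {C C' : DLConcept} : InClos D C → DirectSub C' C → InClos D C'
  | nnf {C : DLConcept} : InClos D C → InClos D C.nnfNeg

/-- The roles occurring in a concept. -/
def DLConcept.rolesOf : DLConcept → Finset Role
  | .top | .bot | .atom _ => ∅
  | .neg C => C.rolesOf
  | .and C D | .or C D => C.rolesOf ∪ D.rolesOf
  | .all R C | .ex R C => insert R C.rolesOf
  | .atleast _ R C | .atmost _ R C => insert R C.rolesOf

/-- `R_D`: the roles occurring in `D` and in the role hierarchy, together with
their inverses. -/
def RD (D : DLConcept) (RIA : List (Role × Role)) : Finset Role :=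
  let base := D.rolesOf ∪ RIA.foldr (fun p acc => insert p.1 (insert p.2 acc)) ∅
  base ∪ base.image Role.Inv

/-- A tableau `T = (S, L, E)` for a SHIQ-concept `D` in NNF w.r.t. a role hierarchy,
satisfying Properties 1–11 of the tableau definition. -/
structure Tableau (Rp : Set ℕ) (RIA : List (Role × Role)) (D : DLConcept) where
  S : Type
  L : S → Set DLConcept
  E : Role → Set (S × S)
  root : ∃ s, D ∈ L s
  p1 : ∀ s C, C ∈ L s → DLConcept.neg C ∉ L s
  p2 : ∀ s C₁ C₂, DLConcept.and C₁ C₂ ∈ L s → C₁ ∈ L s ∧ C₂ ∈ L s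
  p3 : ∀ s C₁ C₂, DLConcept.or C₁ C₂ ∈ L s → C₁ ∈ L s ∨ C₂ ∈ L s
  p4 : ∀ s t S' C, DLConcept.all S' C ∈ L s → (s, t) ∈ E S' → C ∈ L t
  p5 : ∀ s S' C, DLConcept.ex S' C ∈ L s → ∃ t, (s, t) ∈ E S' ∧ C ∈ L t
  p6 : ∀ s t R S' C, DLConcept.all S' C ∈ L s → SubRole RIA R S' → RTrans Rp R →
        (s, t) ∈ E R → DLConcept.all R C ∈ L t
  p7 : ∀ R x y, (x, y) ∈ E R ↔ (y, x) ∈ E R.Inv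
  p8 : ∀ R S', SubRole RIA R S' → ∀ x y, (x, y) ∈ E R → (x, y) ∈ E S'
  p9 : ∀ s n S' C, DLConcept.atmost n S' C ∈ L s →
        Cardinal.mk {t // (s, t) ∈ E S' ∧ C ∈ L t} ≤ (n : Cardinal)
  p10 : ∀ s n S' C, DLConcept.atleast n S' C ∈ L s →
        (n : Cardinal) ≤ Cardinal.mk {t // (s, t) ∈ E S' ∧ C ∈ L t}
  p11 : ∀ s t n S' C,
        (DLConcept.atleast n S' C ∈ L s ∨ DLConcept.atmost n S' C ∈ L s) →
        (s, t) ∈ E S' → C ∈ L t ∨ C.nnfNeg ∈ L t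

/-- A completion tree for the SHIQ algorithm: a finite tree (nodes named by
natural numbers, each non-root node pointing to its parent) with node labels
`lab x ⊆ clos(D)`, edge labels `elb x` (the label of the edge from
`parent x` to `x`), and a symmetric inequality relation `neq` (`≐̸`). -/
structure CTree where
  nodes : Finset ℕ
  root : ℕ
  parent : ℕ → ℕ
  lab : ℕ → Finset DLConcept
  elb : ℕ → Finset Role
  neq : ℕ → ℕ → Prop
  root_mem : root ∈ nodes
  parent_mem : ∀ x ∈ nodes, x ≠ root → parent x ∈ nodes
  reach : ∀ x ∈ nodes, ∃ k, parent^[k] x = root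
  neq_symm : ∀ x y, neq x y → neq y x

namespace CTree

/-- `y` is a successor of `x`. -/
def Succ (t : CTree) (x y : ℕ) : Prop :=
  y ∈ t.nodes ∧ y ≠ t.root ∧ t.parent y = x

/-- `y` is an `R`-successor of `x` (w.r.t. the role hierarchy generated by `RIA`). -/
def RSucc (RIA : List (Role × Role)) (t : CTree) (R : Role) (x y : ℕ) : Prop :=
  t.Succ x y ∧ ∃ S ∈ t.elb y, SubRole RIA S R

/-- `y` is an `R`-neighbour of `x`. -/
def RNeighb (RIA : List (Role × Role)) (t : CTree) (R : Role) (x y : ℕ) : Prop :=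
  t.RSucc RIA R x y ∨ t.RSucc RIA R.Inv y x

/-- `x` is a (proper) ancestor of `y`. -/
def Anc (t : CTree) (x y : ℕ) : Prop :=
  y ∈ t.nodes ∧ ∃ k, 0 < k ∧ t.parent^[k] y = x ∧ ∀ j < k, t.parent^[j] y ≠ t.root

/-- The depth of a node (the length of the path from the root to it). -/
noncomputable def depth (t : CTree) (x : ℕ) : ℕ :=
  sInf {k | t.parent^[k] x = t.root}

/-- The pair-wise blocking witness condition: `x` has ancestors `x' = parent x`,
`y`, `y' = parent y` with `L(x) = L(y)`, `L(x') = L(y')` and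
`L(⟨x',x⟩) = L(⟨y',y⟩)` (i.e. `y` blocks `x`). -/
def Cand (t : CTree) (x : ℕ) : Prop :=
  x ∈ t.nodes ∧ x ≠ t.root ∧
  ∃ y, t.Anc y x ∧ y ≠ t.root ∧ t.Anc (t.parent y) x ∧
    t.lab x = t.lab y ∧ t.lab (t.parent x) = t.lab (t.parent y) ∧
    t.elb x = t.elb y

/-- A non-root node whose incoming edge label has been emptied by the ≤-rule. -/
def EmptyEdge (t : CTree) (x : ℕ) : Prop :=
  x ∈ t.nodes ∧ x ≠ t.root ∧ t.elb x = ∅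

/-- `x` is blocked (directly or indirectly): some node on the path from the root
to `x` carries a pair-wise blocking witness or an emptied incoming edge. -/
def Blocked (t : CTree) (x : ℕ) : Prop :=
  ∃ z, (z = x ∨ t.Anc z x) ∧ (t.Cand z ∨ t.EmptyEdge z)

/-- `x` is directly blocked: it carries a pair-wise blocking witness and none of
its ancestors is blocked. -/
def DirectlyBlocked (t : CTree) (x : ℕ) : Prop :=
  t.Cand x ∧ ∀ z, t.Anc z x → ¬ t.Blocked z

/-- `x` is indirectly blocked: one of its ancestors is blocked, or `x` is a
successor of a node with an emptied edge label. -/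
def IndirectlyBlocked (t : CTree) (x : ℕ) : Prop :=
  (∃ z, t.Anc z x ∧ t.Blocked z) ∨ t.EmptyEdge x

/-- A clash: `{A, ¬A} ⊆ L(x)`, or `(≤ n S C) ∈ L(x)` with `n+1` pairwise
`≐̸`-distinct `S`-neighbours of `x` whose labels contain `C`. -/
def Clash (RIA : List (Role × Role)) (t : CTree) : Prop :=
  ∃ x ∈ t.nodes,
    (∃ A : ℕ, DLConcept.atom A ∈ t.lab x ∧ DLConcept.neg (DLConcept.atom A) ∈ t.lab x) ∨
    (∃ n S C, DLConcept.atmost n S C ∈ t.lab x ∧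
      ∃ ys : Fin (n + 1) → ℕ,
        (∀ i, t.RNeighb RIA S x (ys i) ∧ C ∈ t.lab (ys i)) ∧
        ∀ i j, i ≠ j → t.neq (ys i) (ys j))

end CTree

/-- The expansion rules of the SHIQ tableaux algorithm, as a one-step transition
relation between completion trees. -/
inductive Step (Rp : Set ℕ) (RIA : List (Role × Role)) : CTree → CTree → Prop
  | conj (t t' : CTree) (x : ℕ) (C₁ C₂ : DLConcept)
      (hx : x ∈ t.nodes) (hC : DLConcept.and C₁ C₂ ∈ t.lab x)
      (hnib : ¬ t.IndirectlyBlocked x)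
      (hnew : ¬ ({C₁, C₂} ⊆ t.lab x))
      (hn : t'.nodes = t.nodes) (hr : t'.root = t.root) (hp : t'.parent = t.parent)
      (hl : t'.lab = Function.update t.lab x (t.lab x ∪ {C₁, C₂}))
      (he : t'.elb = t.elb) (hq : t'.neq = t.neq) :
      Step Rp RIA t t'
  | disj (t t' : CTree) (x : ℕ) (C₁ C₂ E : DLConcept)
      (hx : x ∈ t.nodes) (hC : DLConcept.or C₁ C₂ ∈ t.lab x)
      (hnib : ¬ t.IndirectlyBlocked x)
      (hnew : C₁ ∉ t.lab x ∧ C₂ ∉ t.lab x)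
      (hE : E = C₁ ∨ E = C₂)
      (hn : t'.nodes = t.nodes) (hr : t'.root = t.root) (hp : t'.parent = t.parent)
      (hl : t'.lab = Function.update t.lab x (insert E (t.lab x)))
      (he : t'.elb = t.elb) (hq : t'.neq = t.neq) :
      Step Rp RIA t t'
  | exists_ (t t' : CTree) (x y : ℕ) (S : Role) (C : DLConcept)
      (hx : x ∈ t.nodes) (hC : DLConcept.ex S C ∈ t.lab x)
      (hnb : ¬ t.Blocked x)
      (hnew : ¬ ∃ z, t.RNeighb RIA S x z ∧ C ∈ t.lab z)
      (hy : y ∉ t.nodes)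
      (hn : t'.nodes = insert y t.nodes) (hr : t'.root = t.root)
      (hp : t'.parent = Function.update t.parent y x)
      (hl : t'.lab = Function.update t.lab y {C})
      (he : t'.elb = Function.update t.elb y {S})
      (hq : t'.neq = t.neq) :
      Step Rp RIA t t'
  | all (t t' : CTree) (x y : ℕ) (S : Role) (C : DLConcept)
      (hx : x ∈ t.nodes) (hC : DLConcept.all S C ∈ t.lab x)
      (hnib : ¬ t.IndirectlyBlocked x)
      (hng : t.RNeighb RIA S x y) (hnew : C ∉ t.lab y)
      (hn : t'.nodes = t.nodes) (hr : t'.root = t.root) (hp : t'.parent = t.parent)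
      (hl : t'.lab = Function.update t.lab y (insert C (t.lab y)))
      (he : t'.elb = t.elb) (hq : t'.neq = t.neq) :
      Step Rp RIA t t'
  | allTrans (t t' : CTree) (x y : ℕ) (R S : Role) (C : DLConcept)
      (hx : x ∈ t.nodes) (hC : DLConcept.all S C ∈ t.lab x)
      (hnib : ¬ t.IndirectlyBlocked x)
      (htr : RTrans Rp R) (hsub : SubRole RIA R S)
      (hng : t.RNeighb RIA R x y) (hnew : DLConcept.all R C ∉ t.lab y)
      (hn : t'.nodes = t.nodes) (hr : t'.root = t.root) (hp : t'.parent = t.parent)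
      (hl : t'.lab = Function.update t.lab y (insert (DLConcept.all R C) (t.lab y)))
      (he : t'.elb = t.elb) (hq : t'.neq = t.neq) :
      Step Rp RIA t t'
  | choose (t t' : CTree) (x y : ℕ) (n : ℕ) (S : Role) (C E : DLConcept)
      (hx : x ∈ t.nodes)
      (hC : DLConcept.atleast n S C ∈ t.lab x ∨ DLConcept.atmost n S C ∈ t.lab x)
      (hnib : ¬ t.IndirectlyBlocked x)
      (hng : t.RNeighb RIA S x y)
      (hnew : C ∉ t.lab y ∧ C.nnfNeg ∉ t.lab y)
      (hE : E = C ∨ E = C.nnfNeg)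
      (hn : t'.nodes = t.nodes) (hr : t'.root = t.root) (hp : t'.parent = t.parent)
      (hl : t'.lab = Function.update t.lab y (insert E (t.lab y)))
      (he : t'.elb = t.elb) (hq : t'.neq = t.neq) :
      Step Rp RIA t t'
  | geq (t t' : CTree) (x : ℕ) (n : ℕ) (S : Role) (C : DLConcept) (ys : Fin n → ℕ)
      (hx : x ∈ t.nodes) (hC : DLConcept.atleast n S C ∈ t.lab x)
      (hnb : ¬ t.Blocked x)
      (hnew : ¬ ∃ zs : Fin n → ℕ,
        (∀ i, t.RNeighb RIA S x (zs i) ∧ C ∈ t.lab (zs i)) ∧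
        ∀ i j, i ≠ j → t.neq (zs i) (zs j))
      (hinj : Function.Injective ys) (hfresh : ∀ i, ys i ∉ t.nodes)
      (hn : t'.nodes = t.nodes ∪ Finset.image ys Finset.univ)
      (hr : t'.root = t.root)
      (hp1 : ∀ i, t'.parent (ys i) = x)
      (hp2 : ∀ z, (∀ i, z ≠ ys i) → t'.parent z = t.parent z)
      (hl1 : ∀ i, t'.lab (ys i) = {C})
      (hl2 : ∀ z, (∀ i, z ≠ ys i) → t'.lab z = t.lab z)
      (he1 : ∀ i, t'.elb (ys i) = {S})
      (he2 : ∀ z, (∀ i, z ≠ ys i) → t'.elb z = t.elb z)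
      (hq : ∀ u v, t'.neq u v ↔
        (t.neq u v ∨ ∃ i j, i ≠ j ∧ u = ys i ∧ v = ys j)) :
      Step Rp RIA t t'
  | leqSucc (t t' : CTree) (x y z : ℕ) (n : ℕ) (S : Role) (C : DLConcept)
      (hx : x ∈ t.nodes) (hC : DLConcept.atmost n S C ∈ t.lab x)
      (hnib : ¬ t.IndirectlyBlocked x)
      (hcount : n < {w | t.RNeighb RIA S x w ∧ C ∈ t.lab w}.ncard)
      (hy : t.RNeighb RIA S x y) (hz : t.RNeighb RIA S x z)
      (hCy : C ∈ t.lab y) (hCz : C ∈ t.lab z)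
      (hyz : y ≠ z) (hnq : ¬ t.neq y z) (hyanc : ¬ t.Anc y x)
      (hzanc : ¬ t.Anc z x)
      (hn : t'.nodes = t.nodes) (hr : t'.root = t.root) (hp : t'.parent = t.parent)
      (hlz : t'.lab z = t.lab z ∪ t.lab y)
      (hlo : ∀ w, w ≠ z → t'.lab w = t.lab w)
      (hez : t'.elb z = t.elb z ∪ t.elb y)
      (hey : t'.elb y = ∅)
      (heo : ∀ w, w ≠ z → w ≠ y → t'.elb w = t.elb w)
      (hq : ∀ u v, t'.neq u v ↔
        (t.neq u v ∨ (t.neq u y ∧ v = z) ∨ (u = z ∧ t.neq v y))) :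
      Step Rp RIA t t'
  | leqAnc (t t' : CTree) (x y z : ℕ) (n : ℕ) (S : Role) (C : DLConcept)
      (hx : x ∈ t.nodes) (hC : DLConcept.atmost n S C ∈ t.lab x)
      (hnib : ¬ t.IndirectlyBlocked x)
      (hcount : n < {w | t.RNeighb RIA S x w ∧ C ∈ t.lab w}.ncard)
      (hy : t.RNeighb RIA S x y) (hz : t.RNeighb RIA S x z)
      (hCy : C ∈ t.lab y) (hCz : C ∈ t.lab z)
      (hyz : y ≠ z) (hnq : ¬ t.neq y z) (hyanc : ¬ t.Anc y x)
      (hzanc : t.Anc z x)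
      (hn : t'.nodes = t.nodes) (hr : t'.root = t.root) (hp : t'.parent = t.parent)
      (hlz : t'.lab z = t.lab z ∪ t.lab y)
      (hlo : ∀ w, w ≠ z → t'.lab w = t.lab w)
      (hex : t'.elb x = t.elb x ∪ (t.elb y).image Role.Inv)
      (hey : t'.elb y = ∅)
      (heo : ∀ w, w ≠ x → w ≠ y → t'.elb w = t.elb w)
      (hq : ∀ u v, t'.neq u v ↔
        (t.neq u v ∨ (t.neq u y ∧ v = z) ∨ (u = z ∧ t.neq v y))) :
      Step Rp RIA t t'

/-- The initial completion tree: a single root node labelled `{D}`. -/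
def initTree (D : DLConcept) : CTree where
  nodes := {0}
  root := 0
  parent := id
  lab := fun x => if x = 0 then {D} else ∅
  elb := fun _ => ∅
  neq := fun _ _ => False
  root_mem := by simp
  parent_mem := by intro x hx hne; simp at hx; exact absurd hx hne
  reach := by intro x hx; simp at hx; exact ⟨0, by simpa using hx⟩
  neq_symm := by intro _ _ h; exact h

/-- A completion tree is complete iff no expansion rule is applicable to it. -/
def Complete (Rp : Set ℕ) (RIA : List (Role × Role)) (t : CTree) : Prop :=
  ¬ ∃ t', Step Rp RIA t t'
/-! ### Auxiliary development for the completeness proof -/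

section Aux

@[simp] lemma Role.inv_inv (R : Role) : R.Inv.Inv = R := by cases R <;> rfl

lemma SubRole.inv {RIA : List (Role × Role)} {R S : Role} (h : SubRole RIA R S) :
    SubRole RIA R.Inv S.Inv := by
  induction h with
  | refl => exact Relation.ReflTransGen.refl
  | tail _ hstep ih =>
      refine ih.tail ?_
      rcases hstep with h | h
      · exact Or.inr (by simpa using h)
      · exact Or.inl (by simpa using h)

namespace CTree

variable {t : CTree} {x y z w : ℕ}

lemma iterate_mod {f : ℕ → ℕ} {x : ℕ} {k : ℕ} (hk : 0 < k) (hcyc : f^[k] x = x) :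
    ∀ n, f^[n] x = f^[n % k] x := by
  intro n
  induction n using Nat.strong_induction_on with
  | _ n ih =>
    by_cases h : n < k
    · rw [Nat.mod_eq_of_lt h]
    · push_neg at h
      have h2 : f^[n] x = f^[n - k] x := by
        conv_lhs => rw [show n = (n - k) + k from (Nat.sub_add_cancel h).symm]
        rw [Function.iterate_add_apply, hcyc]
      have h3 : n % k = (n - k) % k := by
        conv_lhs => rw [show n = (n - k) + k from (Nat.sub_add_cancel h).symm]
        rw [Nat.add_mod_right]
      rw [h2, h3]
      exact ih (n - k) (by omega)

lemma no_cycle {k : ℕ} (hx : x ∈ t.nodes) (hk : 0 < k) (hcyc : t.parent^[k] x = x)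
    (hroot : ∀ j < k, t.parent^[j] x ≠ t.root) : False := by
  obtain ⟨m, hm⟩ := t.reach x hx
  have h := iterate_mod hk hcyc m
  rw [hm] at h
  exact hroot (m % k) (Nat.mod_lt _ hk) h.symm

lemma chain_mem (hpr : t.parent t.root = t.root) (hx : x ∈ t.nodes) :
    ∀ k, t.parent^[k] x ∈ t.nodes := by
  intro k; induction k with
  | zero => exact hx
  | succ k ih =>
    rw [Function.iterate_succ_apply']
    by_cases h : t.parent^[k] x = t.root
    · rw [h, hpr]; exact t.root_mem
    · exact t.parent_mem _ ih h

lemma Anc.mem (h : t.Anc z x) : x ∈ t.nodes := h.1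

lemma Anc.ne_root (h : t.Anc z x) : x ≠ t.root := by
  obtain ⟨_, k, hk, _, hj⟩ := h
  simpa using hj 0 hk

lemma anc_irrefl (h : t.Anc x x) : False := by
  obtain ⟨hx, k, hk, hcyc, hj⟩ := h
  exact no_cycle hx hk hcyc hj

lemma parent_anc (hx : x ∈ t.nodes) (hne : x ≠ t.root) : t.Anc (t.parent x) x := by
  refine ⟨hx, 1, one_pos, by simp, ?_⟩
  intro j hj
  interval_cases j
  simpa using hne

lemma succ_not_anc (hs : t.Succ x y) (ha : t.Anc y x) : False := by
  obtain ⟨hy, hyr, hp⟩ := hs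
  obtain ⟨hx, k, hk, hit, hj⟩ := ha
  have hcyc : t.parent^[k + 1] x = x := by
    rw [Function.iterate_succ_apply', hit, hp]
  refine no_cycle hx (by omega) hcyc ?_
  intro j hj'
  rcases Nat.lt_or_ge j k with h | h
  · exact hj j h
  · have hjk : j = k := by omega
    rw [hjk, hit]; exact hyr

lemma neighb_cases {RIA : List (Role × Role)} {S : Role} (h : t.RNeighb RIA S x w) :
    (t.Succ x w ∧ ∃ S₀ ∈ t.elb w, SubRole RIA S₀ S) ∨
    (x ∈ t.nodes ∧ x ≠ t.root ∧ t.parent x = w ∧ ∃ S₀ ∈ t.elb x, SubRole RIA S₀ S.Inv) := by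
  rcases h with ⟨hs, hS⟩ | ⟨hs, hS⟩
  · exact Or.inl ⟨hs, hS⟩
  · exact Or.inr ⟨hs.1, hs.2.1, hs.2.2, hS⟩

lemma neighb_succ_of_not_anc {RIA : List (Role × Role)} {S : Role}
    (h : t.RNeighb RIA S x w) (hna : ¬ t.Anc w x) :
    t.Succ x w ∧ ∃ S₀ ∈ t.elb w, SubRole RIA S₀ S := by
  rcases neighb_cases h with h' | ⟨hx, hxr, hp, _⟩
  · exact h'
  · exact absurd (hp ▸ parent_anc hx hxr) hna

lemma neighb_anc_parent {RIA : List (Role × Role)} {S : Role}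
    (h : t.RNeighb RIA S x w) (ha : t.Anc w x) :
    x ∈ t.nodes ∧ x ≠ t.root ∧ t.parent x = w ∧ ∃ S₀ ∈ t.elb x, SubRole RIA S₀ S.Inv := by
  rcases neighb_cases h with ⟨hs, _⟩ | h'
  · exact absurd ha (fun ha => succ_not_anc hs ha)
  · exact h'

lemma neighb_mem {RIA : List (Role × Role)} {S : Role}
    (hx : x ∈ t.nodes) (h : t.RNeighb RIA S x w) : w ∈ t.nodes := by
  rcases neighb_cases h with ⟨hs, _⟩ | ⟨_, hxr, hp, _⟩
  · exact hs.1
  · exact hp ▸ t.parent_mem x hx hxr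

lemma depth_spec (hx : x ∈ t.nodes) : t.parent^[t.depth x] x = t.root :=
  Nat.sInf_mem (t.reach x hx)

lemma depth_le {k : ℕ} (h : t.parent^[k] x = t.root) : t.depth x ≤ k :=
  Nat.sInf_le h

lemma depth_root : t.depth t.root = 0 :=
  Nat.le_zero.mp (depth_le (by simp))

lemma ne_root_of_lt_depth {j : ℕ} (hj : j < t.depth x) : t.parent^[j] x ≠ t.root :=
  fun h => absurd (depth_le h) (by omega)

lemma depth_pos (hx : x ∈ t.nodes) (hne : x ≠ t.root) : 0 < t.depth x := by
  rcases Nat.eq_zero_or_pos (t.depth x) with h | h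
  · have := depth_spec hx
    rw [h] at this
    exact absurd this hne
  · exact h

lemma depth_parent (hx : x ∈ t.nodes) (hne : x ≠ t.root) :
    t.depth x = t.depth (t.parent x) + 1 := by
  obtain ⟨d, hd⟩ := Nat.exists_eq_add_of_lt (depth_pos hx hne)
  rw [zero_add] at hd
  have h1 : t.parent^[d] (t.parent x) = t.root := by
    have h := depth_spec hx
    rw [hd, Function.iterate_succ_apply] at h
    exact h
  have h2 : t.depth (t.parent x) ≤ d := depth_le h1
  have h3 : d ≤ t.depth (t.parent x) := by
    have hmem : t.parent x ∈ t.nodes := t.parent_mem x hx hne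
    have h4 : t.parent^[t.depth (t.parent x) + 1] x = t.root := by
      rw [Function.iterate_succ_apply]
      exact depth_spec hmem
    have := depth_le h4
    omega
  omega

lemma iterate_agree (hpr : t.parent t.root = t.root) {p' : ℕ → ℕ}
    (hag : ∀ z ∈ t.nodes, p' z = t.parent z) (hx : x ∈ t.nodes) :
    ∀ k, p'^[k] x = t.parent^[k] x := by
  intro k; induction k with
  | zero => rfl
  | succ k ih =>
    rw [Function.iterate_succ_apply', Function.iterate_succ_apply', ih,
      hag _ (chain_mem hpr hx k)]

lemma depth_agree {t t' : CTree} (hpr : t.parent t.root = t.root)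
    (hag : ∀ z ∈ t.nodes, t'.parent z = t.parent z) (hr : t'.root = t.root)
    (hx : x ∈ t.nodes) : t'.depth x = t.depth x := by
  have hset : {k | t'.parent^[k] x = t'.root} = {k | t.parent^[k] x = t.root} := by
    ext k
    rw [Set.mem_setOf_eq, Set.mem_setOf_eq, iterate_agree hpr hag hx k, hr]
  unfold depth
  rw [hset]

end CTree

end Aux

section Clos

namespace DLConcept

/-- Syntactic subconcept closure. -/
def subc : DLConcept → Finset DLConcept
  | .top => {.top}
  | .bot => {.bot}
  | .atom a => {.atom a}
  | .neg C => insert (.neg C) C.subc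
  | .and C D => insert (.and C D) (C.subc ∪ D.subc)
  | .or C D => insert (.or C D) (C.subc ∪ D.subc)
  | .all R C => insert (.all R C) C.subc
  | .ex R C => insert (.ex R C) C.subc
  | .atleast n R C => insert (.atleast n R C) C.subc
  | .atmost n R C => insert (.atmost n R C) C.subc

lemma self_mem_subc (C : DLConcept) : C ∈ C.subc := by
  cases C <;> simp [subc]

lemma subc_trans : ∀ (X : DLConcept), ∀ C ∈ X.subc, C.subc ⊆ X.subc := by
  intro X
  induction X with
  | top => intro C hC; simp [subc] at hC; subst hC; exact Finset.Subset.refl _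
  | bot => intro C hC; simp [subc] at hC; subst hC; exact Finset.Subset.refl _
  | atom a => intro C hC; simp [subc] at hC; subst hC; exact Finset.Subset.refl _
  | neg A ihA =>
      intro C hC
      rw [subc, Finset.mem_insert] at hC
      rcases hC with h | h
      · subst h; exact Finset.Subset.refl _
      · exact (ihA C h).trans (Finset.subset_insert _ _)
  | and A B ihA ihB =>
      intro C hC
      rw [subc, Finset.mem_insert] at hC
      rcases hC with h | h
      · subst h; exact Finset.Subset.refl _
      · rcases Finset.mem_union.mp h with h | h
        · exact (ihA C h).trans ((Finset.subset_union_left).trans (Finset.subset_insert _ _))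
        · exact (ihB C h).trans ((Finset.subset_union_right).trans (Finset.subset_insert _ _))
  | or A B ihA ihB =>
      intro C hC
      rw [subc, Finset.mem_insert] at hC
      rcases hC with h | h
      · subst h; exact Finset.Subset.refl _
      · rcases Finset.mem_union.mp h with h | h
        · exact (ihA C h).trans ((Finset.subset_union_left).trans (Finset.subset_insert _ _))
        · exact (ihB C h).trans ((Finset.subset_union_right).trans (Finset.subset_insert _ _))
  | all R A ihA =>
      intro C hC
      rw [subc, Finset.mem_insert] at hC
      rcases hC with h | h
      · subst h; exact Finset.Subset.refl _
      · exact (ihA C h).trans (Finset.subset_insert _ _)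
  | ex R A ihA =>
      intro C hC
      rw [subc, Finset.mem_insert] at hC
      rcases hC with h | h
      · subst h; exact Finset.Subset.refl _
      · exact (ihA C h).trans (Finset.subset_insert _ _)
  | atleast n R A ihA =>
      intro C hC
      rw [subc, Finset.mem_insert] at hC
      rcases hC with h | h
      · subst h; exact Finset.Subset.refl _
      · exact (ihA C h).trans (Finset.subset_insert _ _)
  | atmost n R A ihA =>
      intro C hC
      rw [subc, Finset.mem_insert] at hC
      rcases hC with h | h
      · subst h; exact Finset.Subset.refl _
      · exact (ihA C h).trans (Finset.subset_insert _ _)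

lemma directSub_mem_subc {C' C : DLConcept} (h : DirectSub C' C) : C' ∈ C.subc := by
  cases h <;> simp [subc, self_mem_subc]

lemma mem_subc_of_directSub {X C C' : DLConcept} (hC : C ∈ X.subc)
    (h : DirectSub C' C) : C' ∈ X.subc :=
  subc_trans X C hC (directSub_mem_subc h)

lemma subc_roles : ∀ (X : DLConcept), ∀ C ∈ X.subc, C.rolesOf ⊆ X.rolesOf := by
  intro X
  induction X with
  | top => intro C hC; simp [subc] at hC; subst hC; exact Finset.Subset.refl _
  | bot => intro C hC; simp [subc] at hC; subst hC; exact Finset.Subset.refl _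
  | atom a => intro C hC; simp [subc] at hC; subst hC; exact Finset.Subset.refl _
  | neg A ihA =>
      intro C hC
      rw [subc, Finset.mem_insert] at hC
      rcases hC with h | h
      · subst h; exact Finset.Subset.refl _
      · exact (ihA C h).trans (by rw [rolesOf])
  | and A B ihA ihB =>
      intro C hC
      rw [subc, Finset.mem_insert] at hC
      rcases hC with h | h
      · subst h; exact Finset.Subset.refl _
      · rcases Finset.mem_union.mp h with h | h
        · exact (ihA C h).trans (by rw [rolesOf]; exact Finset.subset_union_left)
        · exact (ihB C h).trans (by rw [rolesOf]; exact Finset.subset_union_right)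
  | or A B ihA ihB =>
      intro C hC
      rw [subc, Finset.mem_insert] at hC
      rcases hC with h | h
      · subst h; exact Finset.Subset.refl _
      · rcases Finset.mem_union.mp h with h | h
        · exact (ihA C h).trans (by rw [rolesOf]; exact Finset.subset_union_left)
        · exact (ihB C h).trans (by rw [rolesOf]; exact Finset.subset_union_right)
  | all R A ihA =>
      intro C hC
      rw [subc, Finset.mem_insert] at hC
      rcases hC with h | h
      · subst h; exact Finset.Subset.refl _
      · exact (ihA C h).trans (by rw [rolesOf]; exact Finset.subset_insert _ _)
  | ex R A ihA =>
      intro C hC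
      rw [subc, Finset.mem_insert] at hC
      rcases hC with h | h
      · subst h; exact Finset.Subset.refl _
      · exact (ihA C h).trans (by rw [rolesOf]; exact Finset.subset_insert _ _)
  | atleast n R A ihA =>
      intro C hC
      rw [subc, Finset.mem_insert] at hC
      rcases hC with h | h
      · subst h; exact Finset.Subset.refl _
      · exact (ihA C h).trans (by rw [rolesOf]; exact Finset.subset_insert _ _)
  | atmost n R A ihA =>
      intro C hC
      rw [subc, Finset.mem_insert] at hC
      rcases hC with h | h
      · subst h; exact Finset.Subset.refl _
      · exact (ihA C h).trans (by rw [rolesOf]; exact Finset.subset_insert _ _)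

lemma rolesOf_nnfNeg : ∀ (C : DLConcept), C.nnfNeg.rolesOf ⊆ C.rolesOf := by
  intro C
  induction C with
  | top => simp [nnfNeg, rolesOf]
  | bot => simp [nnfNeg, rolesOf]
  | atom a => simp [nnfNeg, rolesOf]
  | neg A ihA => simp [nnfNeg, rolesOf]
  | and A B ihA ihB =>
      rw [nnfNeg, rolesOf, rolesOf]
      exact Finset.union_subset_union ihA ihB
  | or A B ihA ihB =>
      rw [nnfNeg, rolesOf, rolesOf]
      exact Finset.union_subset_union ihA ihB
  | all R A ihA =>
      rw [nnfNeg, rolesOf, rolesOf]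
      exact Finset.insert_subset_insert _ ihA
  | ex R A ihA =>
      rw [nnfNeg, rolesOf, rolesOf]
      exact Finset.insert_subset_insert _ ihA
  | atleast n R A ihA =>
      cases n with
      | zero => simp [nnfNeg, rolesOf]
      | succ m => rw [nnfNeg, rolesOf, rolesOf]
  | atmost n R A ihA => rw [nnfNeg, rolesOf, rolesOf]

/-- `subc` together with its `nnfNeg`s. -/
def nnfc (X : DLConcept) : Finset DLConcept := X.subc ∪ X.subc.image nnfNeg

lemma subc_subset_nnfc (X : DLConcept) : X.subc ⊆ X.nnfc := Finset.subset_union_left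

lemma nnfc_roles (X : DLConcept) : ∀ C ∈ X.nnfc, C.rolesOf ⊆ X.rolesOf := by
  intro C hC
  rcases Finset.mem_union.mp hC with h | h
  · exact subc_roles X C h
  · obtain ⟨W, hW, rfl⟩ := Finset.mem_image.mp h
    exact (rolesOf_nnfNeg W).trans (subc_roles X W hW)

end DLConcept

end Clos

section ClosF

open DLConcept

variable {D : DLConcept} {RIA : List (Role × Role)}

/-- The base role set (before adding inverses). -/
def baseR (D : DLConcept) (RIA : List (Role × Role)) : Finset Role :=
  D.rolesOf ∪ RIA.foldr (fun p acc => insert p.1 (insert p.2 acc)) ∅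

lemma RD_eq (D : DLConcept) (RIA : List (Role × Role)) :
    RD D RIA = baseR D RIA ∪ (baseR D RIA).image Role.Inv := rfl

lemma baseR_subset_RD : baseR D RIA ⊆ RD D RIA := by
  rw [RD_eq]; exact Finset.subset_union_left

lemma RD_inv {R : Role} (h : R ∈ RD D RIA) : R.Inv ∈ RD D RIA := by
  rw [RD_eq] at h ⊢
  rcases Finset.mem_union.mp h with h | h
  · exact Finset.mem_union_right _ (Finset.mem_image_of_mem _ h)
  · obtain ⟨R₀, hR₀, rfl⟩ := Finset.mem_image.mp h
    exact Finset.mem_union_left _ (by simpa using hR₀)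

lemma mem_fold_of_mem_RIA : ∀ (l : List (Role × Role)) (p : Role × Role), p ∈ l →
    p.1 ∈ l.foldr (fun p acc => insert p.1 (insert p.2 acc)) (∅ : Finset Role) ∧
    p.2 ∈ l.foldr (fun p acc => insert p.1 (insert p.2 acc)) (∅ : Finset Role) := by
  intro l
  induction l with
  | nil => intro p hp; simp at hp
  | cons q l ih =>
      intro p hp
      rcases List.mem_cons.mp hp with h | h
      · subst h; constructor <;> simp
      · obtain ⟨h1, h2⟩ := ih p h
        constructor <;> simp [h1, h2]

lemma mem_RD_of_RIA {R S : Role} (h : (R, S) ∈ RIA) : R ∈ RD D RIA ∧ S ∈ RD D RIA := by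
  obtain ⟨h1, h2⟩ := mem_fold_of_mem_RIA RIA (R, S) h
  exact ⟨baseR_subset_RD (Finset.mem_union_right _ h1),
    baseR_subset_RD (Finset.mem_union_right _ h2)⟩

lemma subRole_mem_RD {R S : Role} (h : SubRole RIA R S) : R = S ∨ R ∈ RD D RIA := by
  rcases h.cases_head with h | ⟨c, hgen, _⟩
  · exact Or.inl h
  · right
    rcases hgen with h | h
    · exact (mem_RD_of_RIA h).1
    · have := (mem_RD_of_RIA (D := D) h).1
      simpa using RD_inv this

/-- The finite closure `clos(D)` enlarged with `∀R.C` for all roles `R ∈ R_D`: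
    a finite set of concepts closed under all label-extending rules. -/
def closF (D : DLConcept) (RIA : List (Role × Role)) : Finset DLConcept :=
  D.nnfc ∪ ((RD D RIA) ×ˢ D.nnfc).image (fun p => DLConcept.all p.1 p.2)

lemma nnfc_subset_closF : D.nnfc ⊆ closF D RIA := Finset.subset_union_left

lemma D_mem_closF : D ∈ closF D RIA :=
  nnfc_subset_closF (subc_subset_nnfc D (self_mem_subc D))

lemma closF_cases {C : DLConcept} (h : C ∈ closF D RIA) :
    C ∈ D.subc ∨ (∃ W ∈ D.subc, C = W.nnfNeg) ∨
    (∃ R C₀, R ∈ RD D RIA ∧ C₀ ∈ D.nnfc ∧ C = DLConcept.all R C₀) := by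
  rcases Finset.mem_union.mp h with h | h
  · rcases Finset.mem_union.mp h with h | h
    · exact Or.inl h
    · obtain ⟨W, hW, rfl⟩ := Finset.mem_image.mp h
      exact Or.inr (Or.inl ⟨W, hW, rfl⟩)
  · obtain ⟨⟨R, C₀⟩, hp, rfl⟩ := Finset.mem_image.mp h
    obtain ⟨h1, h2⟩ := Finset.mem_product.mp hp
    exact Or.inr (Or.inr ⟨R, C₀, h1, h2, rfl⟩)

lemma subc_mem_closF {C : DLConcept} (h : C ∈ D.subc) : C ∈ closF D RIA :=
  nnfc_subset_closF (subc_subset_nnfc D h)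

lemma nnfNeg_subc_mem_closF {C : DLConcept} (h : C ∈ D.subc) :
    C.nnfNeg ∈ closF D RIA :=
  nnfc_subset_closF (Finset.mem_union_right _ (Finset.mem_image_of_mem _ h))

lemma closF_and {C₁ C₂ : DLConcept} (h : DLConcept.and C₁ C₂ ∈ closF D RIA) :
    C₁ ∈ closF D RIA ∧ C₂ ∈ closF D RIA := by
  rcases closF_cases h with h | ⟨W, hW, heq⟩ | ⟨R, C₀, _, _, heq⟩
  · exact ⟨subc_mem_closF (mem_subc_of_directSub h (DirectSub.andl _ _)),
      subc_mem_closF (mem_subc_of_directSub h (DirectSub.andr _ _))⟩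
  · cases W with
    | neg A =>
        rw [nnfNeg] at heq
        subst heq
        have hA : DLConcept.and C₁ C₂ ∈ D.subc := mem_subc_of_directSub hW (DirectSub.neg _)
        exact ⟨subc_mem_closF (mem_subc_of_directSub hA (DirectSub.andl _ _)),
          subc_mem_closF (mem_subc_of_directSub hA (DirectSub.andr _ _))⟩
    | or A B =>
        rw [nnfNeg] at heq
        injection heq with h1 h2
        subst h1; subst h2
        exact ⟨nnfNeg_subc_mem_closF (mem_subc_of_directSub hW (DirectSub.orl _ _)),
          nnfNeg_subc_mem_closF (mem_subc_of_directSub hW (DirectSub.orr _ _))⟩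
    | atleast n R A => cases n <;> simp [nnfNeg] at heq
    | top => simp [nnfNeg] at heq
    | bot => simp [nnfNeg] at heq
    | atom a => simp [nnfNeg] at heq
    | and A B => simp [nnfNeg] at heq
    | all R A => simp [nnfNeg] at heq
    | ex R A => simp [nnfNeg] at heq
    | atmost n R A => simp [nnfNeg] at heq
  · simp at heq

lemma closF_or {C₁ C₂ : DLConcept} (h : DLConcept.or C₁ C₂ ∈ closF D RIA) :
    C₁ ∈ closF D RIA ∧ C₂ ∈ closF D RIA := by
  rcases closF_cases h with h | ⟨W, hW, heq⟩ | ⟨R, C₀, _, _, heq⟩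
  · exact ⟨subc_mem_closF (mem_subc_of_directSub h (DirectSub.orl _ _)),
      subc_mem_closF (mem_subc_of_directSub h (DirectSub.orr _ _))⟩
  · cases W with
    | neg A =>
        rw [nnfNeg] at heq
        subst heq
        have hA : DLConcept.or C₁ C₂ ∈ D.subc := mem_subc_of_directSub hW (DirectSub.neg _)
        exact ⟨subc_mem_closF (mem_subc_of_directSub hA (DirectSub.orl _ _)),
          subc_mem_closF (mem_subc_of_directSub hA (DirectSub.orr _ _))⟩
    | and A B =>
        rw [nnfNeg] at heq
        injection heq with h1 h2
        subst h1; subst h2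
        exact ⟨nnfNeg_subc_mem_closF (mem_subc_of_directSub hW (DirectSub.andl _ _)),
          nnfNeg_subc_mem_closF (mem_subc_of_directSub hW (DirectSub.andr _ _))⟩
    | atleast n R A => cases n <;> simp [nnfNeg] at heq
    | top => simp [nnfNeg] at heq
    | bot => simp [nnfNeg] at heq
    | atom a => simp [nnfNeg] at heq
    | or A B => simp [nnfNeg] at heq
    | all R A => simp [nnfNeg] at heq
    | ex R A => simp [nnfNeg] at heq
    | atmost n R A => simp [nnfNeg] at heq
  · simp at heq

lemma closF_ex {S : Role} {C : DLConcept} (h : DLConcept.ex S C ∈ closF D RIA) :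
    C ∈ closF D RIA := by
  rcases closF_cases h with h | ⟨W, hW, heq⟩ | ⟨R, C₀, _, _, heq⟩
  · exact subc_mem_closF (mem_subc_of_directSub h (DirectSub.ex _ _))
  · cases W with
    | neg A =>
        rw [nnfNeg] at heq
        subst heq
        have hA : DLConcept.ex S C ∈ D.subc := mem_subc_of_directSub hW (DirectSub.neg _)
        exact subc_mem_closF (mem_subc_of_directSub hA (DirectSub.ex _ _))
    | all R A =>
        rw [nnfNeg] at heq
        injection heq with h1 h2
        subst h1; subst h2
        exact nnfNeg_subc_mem_closF (mem_subc_of_directSub hW (DirectSub.all _ _))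
    | atleast n R A => cases n <;> simp [nnfNeg] at heq
    | top => simp [nnfNeg] at heq
    | bot => simp [nnfNeg] at heq
    | atom a => simp [nnfNeg] at heq
    | and A B => simp [nnfNeg] at heq
    | or A B => simp [nnfNeg] at heq
    | ex R A => simp [nnfNeg] at heq
    | atmost n R A => simp [nnfNeg] at heq
  · simp at heq

lemma all_mem_closF_cases {S : Role} {C : DLConcept}
    (h : DLConcept.all S C ∈ closF D RIA) : C ∈ D.nnfc := by
  rcases closF_cases h with h | ⟨W, hW, heq⟩ | ⟨R, C₀, hR, hC₀, heq⟩
  · exact subc_subset_nnfc D (mem_subc_of_directSub h (DirectSub.all _ _))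
  · cases W with
    | neg A =>
        rw [nnfNeg] at heq
        subst heq
        have hA : DLConcept.all S C ∈ D.subc := mem_subc_of_directSub hW (DirectSub.neg _)
        exact subc_subset_nnfc D (mem_subc_of_directSub hA (DirectSub.all _ _))
    | ex R A =>
        rw [nnfNeg] at heq
        injection heq with h1 h2
        subst h1; subst h2
        exact Finset.mem_union_right _
          (Finset.mem_image_of_mem _ (mem_subc_of_directSub hW (DirectSub.ex _ _)))
    | atleast n R A => cases n <;> simp [nnfNeg] at heq
    | top => simp [nnfNeg] at heq
    | bot => simp [nnfNeg] at heq
    | atom a => simp [nnfNeg] at heq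
    | and A B => simp [nnfNeg] at heq
    | or A B => simp [nnfNeg] at heq
    | all R A => simp [nnfNeg] at heq
    | atmost n R A => simp [nnfNeg] at heq
  · injection heq with h1 h2
    subst h1; subst h2
    exact hC₀

lemma closF_all_body {S : Role} {C : DLConcept} (h : DLConcept.all S C ∈ closF D RIA) :
    C ∈ closF D RIA := by
  have h1 := all_mem_closF_cases h
  exact nnfc_subset_closF h1

lemma closF_all_role {S R : Role} {C : DLConcept} (h : DLConcept.all S C ∈ closF D RIA)
    (hR : R ∈ RD D RIA) : DLConcept.all R C ∈ closF D RIA := by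
  have h1 := all_mem_closF_cases h
  exact Finset.mem_union_right _
    (Finset.mem_image.mpr ⟨(R, C), Finset.mem_product.mpr ⟨hR, h1⟩, rfl⟩)

lemma closF_num {n : ℕ} {S : Role} {C : DLConcept}
    (h : DLConcept.atleast n S C ∈ closF D RIA ∨ DLConcept.atmost n S C ∈ closF D RIA) :
    C ∈ closF D RIA ∧ C.nnfNeg ∈ closF D RIA := by
  have hsub : C ∈ D.subc := by
    rcases h with h | h <;>
    · rcases closF_cases h with h | ⟨W, hW, heq⟩ | ⟨R, C₀, _, _, heq⟩
      · first
        | exact mem_subc_of_directSub h (DirectSub.atleast _ _ _)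
        | exact mem_subc_of_directSub h (DirectSub.atmost _ _ _)
      · cases W with
        | neg A =>
            rw [nnfNeg] at heq
            subst heq
            first
            | exact mem_subc_of_directSub
                (mem_subc_of_directSub hW (DirectSub.neg _)) (DirectSub.atleast _ _ _)
            | exact mem_subc_of_directSub
                (mem_subc_of_directSub hW (DirectSub.neg _)) (DirectSub.atmost _ _ _)
        | atleast m R A =>
            cases m with
            | zero => simp [nnfNeg] at heq
            | succ m =>
                rw [nnfNeg] at heq
                first
                | (injection heq with h1 h2 h3
                   subst h2; subst h3
                   exact mem_subc_of_directSub hW (DirectSub.atleast _ _ _))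
                | injection heq
        | atmost m R A =>
            rw [nnfNeg] at heq
            first
            | (injection heq with h1 h2 h3
               subst h2; subst h3
               exact mem_subc_of_directSub hW (DirectSub.atmost _ _ _))
            | injection heq
        | top => simp [nnfNeg] at heq
        | bot => simp [nnfNeg] at heq
        | atom a => simp [nnfNeg] at heq
        | and A B => simp [nnfNeg] at heq
        | or A B => simp [nnfNeg] at heq
        | all R A => simp [nnfNeg] at heq
        | ex R A => simp [nnfNeg] at heq
      · simp at heq
  exact ⟨subc_mem_closF hsub, nnfNeg_subc_mem_closF hsub⟩

lemma closF_roles {C : DLConcept} (h : C ∈ closF D RIA) : C.rolesOf ⊆ RD D RIA := by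
  have hD : D.rolesOf ⊆ RD D RIA :=
    (Finset.subset_union_left).trans baseR_subset_RD
  rcases Finset.mem_union.mp h with h | h
  · exact (nnfc_roles D C h).trans hD
  · obtain ⟨⟨R, C₀⟩, hp, rfl⟩ := Finset.mem_image.mp h
    obtain ⟨h1, h2⟩ := Finset.mem_product.mp hp
    rw [rolesOf]
    exact Finset.insert_subset h1 ((nnfc_roles D C₀ h2).trans hD)

end ClosF

section Blocking

variable {D : DLConcept} {RIA : List (Role × Role)}

/-- The space of pair-wise blocking triples. -/
def tripleSpace (D : DLConcept) (RIA : List (Role × Role)) :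
    Finset (Finset DLConcept × Finset DLConcept × Finset Role) :=
  (closF D RIA).powerset ×ˢ ((closF D RIA).powerset ×ˢ (RD D RIA).powerset)

/-- Depth bound for unblocked nodes. -/
def Bdep (D : DLConcept) (RIA : List (Role × Role)) : ℕ := (tripleSpace D RIA).card + 1

lemma depth_le_of_not_blocked {t : CTree} (hpr : t.parent t.root = t.root)
    (hlab : ∀ x ∈ t.nodes, t.lab x ⊆ closF D RIA)
    (helb : ∀ x ∈ t.nodes, t.elb x ⊆ RD D RIA)
    {x : ℕ} (hx : x ∈ t.nodes) (hnb : ¬ t.Blocked x) : t.depth x ≤ Bdep D RIA := by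
  by_contra hgt
  push_neg at hgt
  set m := t.depth x with hm
  have hmem : ∀ i, t.parent^[i] x ∈ t.nodes := CTree.chain_mem hpr hx
  have hner : ∀ i < m, t.parent^[i] x ≠ t.root := fun i hi => CTree.ne_root_of_lt_depth hi
  -- pigeonhole on the triples along the path
  have hcard : (tripleSpace D RIA).card < (Finset.Icc 1 (m - 1)).card := by
    rw [Nat.card_Icc]
    unfold Bdep at hgt
    omega
  have hmaps : ∀ i ∈ Finset.Icc 1 (m - 1),
      (t.lab (t.parent^[i] x), t.lab (t.parent^[i+1] x), t.elb (t.parent^[i] x))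
        ∈ tripleSpace D RIA := by
    intro i _
    refine Finset.mem_product.mpr ⟨?_, Finset.mem_product.mpr ⟨?_, ?_⟩⟩
    · exact Finset.mem_powerset.mpr (hlab _ (hmem i))
    · exact Finset.mem_powerset.mpr (hlab _ (hmem (i+1)))
    · exact Finset.mem_powerset.mpr (helb _ (hmem i))
  obtain ⟨a, ha, b, hb, hab, heq⟩ :=
    Finset.exists_ne_map_eq_of_card_lt_of_maps_to hcard hmaps
  -- wlog a < b
  have key : ∀ i j, i ∈ Finset.Icc 1 (m - 1) → j ∈ Finset.Icc 1 (m - 1) → i < j →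
      (t.lab (t.parent^[i] x), t.lab (t.parent^[i+1] x), t.elb (t.parent^[i] x)) =
      (t.lab (t.parent^[j] x), t.lab (t.parent^[j+1] x), t.elb (t.parent^[j] x)) →
      False := by
    intro i j hi hj hij he
    rw [Finset.mem_Icc] at hi hj
    obtain ⟨he1, he2, he3⟩ : t.lab (t.parent^[i] x) = t.lab (t.parent^[j] x) ∧
        t.lab (t.parent^[i+1] x) = t.lab (t.parent^[j+1] x) ∧
        t.elb (t.parent^[i] x) = t.elb (t.parent^[j] x) := by
      refine ⟨congrArg Prod.fst he, ?_, ?_⟩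
      · have := congrArg Prod.snd he; exact congrArg Prod.fst this
      · have := congrArg Prod.snd he; exact congrArg Prod.snd this
    have hiter : ∀ a b : ℕ, t.parent^[a] (t.parent^[b] x) = t.parent^[a + b] x := by
      intro a b; rw [← Function.iterate_add_apply]
    have hpar : ∀ a : ℕ, t.parent (t.parent^[a] x) = t.parent^[a+1] x := by
      intro a; exact (Function.iterate_succ_apply' t.parent a x).symm
    have hmlt : m - 1 < m := by omega
    -- Anc of p_j over p_i
    have hanc1 : t.Anc (t.parent^[j] x) (t.parent^[i] x) := by
      refine ⟨hmem i, j - i, by omega, ?_, ?_⟩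
      · rw [hiter]; congr 1; omega
      · intro l hl
        rw [hiter]
        exact hner (l + i) (by omega)
    have hanc2 : t.Anc (t.parent (t.parent^[j] x)) (t.parent^[i] x) := by
      rw [hpar]
      refine ⟨hmem i, j + 1 - i, by omega, ?_, ?_⟩
      · rw [hiter]; congr 1; omega
      · intro l hl
        rw [hiter]
        exact hner (l + i) (by omega)
    have hcand : t.Cand (t.parent^[i] x) := by
      refine ⟨hmem i, hner i (by omega), t.parent^[j] x, hanc1, hner j (by omega), hanc2,
        he1, ?_, he3⟩
      rw [hpar, hpar]
      exact he2
    have hancx : t.Anc (t.parent^[i] x) x :=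
      ⟨hx, i, by omega, rfl, fun l hl => hner l (by omega)⟩
    exact hnb ⟨t.parent^[i] x, Or.inr hancx, Or.inl hcand⟩
  rcases lt_or_gt_of_ne hab with h | h
  · exact key a b ha hb h heq
  · exact key b a hb ha h heq.symm

end Blocking

section Invariant

variable {Rp : Set ℕ} {RIA : List (Role × Role)} {D : DLConcept}

/-- Witness condition for generating concepts. -/
def CWit (RIA : List (Role × Role)) (t : CTree) (x : ℕ) : DLConcept → Prop
  | .ex S C => ∃ z, t.RNeighb RIA S x z ∧ C ∈ t.lab z
  | .atleast n S C => ∃ zs : Fin n → ℕ,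
      (∀ i, t.RNeighb RIA S x (zs i) ∧ C ∈ t.lab (zs i)) ∧
      ∀ i j, i ≠ j → t.neq (zs i) (zs j)
  | _ => True

/-- Number of successors a generating concept may create. -/
def cweight : DLConcept → ℕ
  | .ex _ _ => 1
  | .atleast n _ _ => n
  | _ => 0

/-- The children of a node. -/
def childset (t : CTree) (x : ℕ) : Finset ℕ :=
  t.nodes.filter (fun y => y ≠ t.root ∧ t.parent y = x)

/-- The main invariant: `π` embeds the completion tree into the tableau, labels live
in the closure, depths are bounded, and `fired` accounts for generating rules. -/
structure GInv (T : Tableau Rp RIA D) (t : CTree) (π : ℕ → T.S)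
    (fired : ℕ → Finset DLConcept) : Prop where
  hlab : ∀ x ∈ t.nodes, ∀ C ∈ t.lab x, C ∈ T.L (π x)
  hedge : ∀ y ∈ t.nodes, y ≠ t.root → ∀ S₀ ∈ t.elb y, (π (t.parent y), π y) ∈ T.E S₀
  hneq : ∀ u v, t.neq u v → u ∈ t.nodes ∧ v ∈ t.nodes ∧ π u ≠ π v
  hclos : ∀ x ∈ t.nodes, t.lab x ⊆ closF D RIA
  helb : ∀ x ∈ t.nodes, t.elb x ⊆ RD D RIA
  hroot : t.parent t.root = t.root
  hdepth : ∀ x ∈ t.nodes, t.depth x ≤ Bdep D RIA + 1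
  hfsub : ∀ x, fired x ⊆ closF D RIA
  hfdom : ∀ x, x ∉ t.nodes → fired x = ∅
  hfwit : ∀ x ∈ t.nodes, ¬ t.EmptyEdge x → ∀ C ∈ fired x, CWit RIA t x C
  hchild : ∀ x, (childset t x).card ≤ (fired x).sum cweight

variable {T : Tableau Rp RIA D} {t : CTree} {π : ℕ → T.S} {fired : ℕ → Finset DLConcept}

lemma neighb_E (I : GInv T t π fired) {S : Role} {x y : ℕ} (hx : x ∈ t.nodes)
    (h : t.RNeighb RIA S x y) : (π x, π y) ∈ T.E S := by
  rcases h with ⟨⟨hy, hyr, hp⟩, S₀, hS₀, hsub⟩ | ⟨⟨hx', hxr, hp⟩, S₀, hS₀, hsub⟩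
  · have h1 := I.hedge y hy hyr S₀ hS₀
    rw [hp] at h1
    exact T.p8 S₀ S hsub _ _ h1
  · have h1 := I.hedge x hx' hxr S₀ hS₀
    rw [hp] at h1
    have h2 := T.p8 S₀ S.Inv hsub _ _ h1
    have h3 := (T.p7 S.Inv (π y) (π x)).mp h2
    rwa [Role.inv_inv] at h3

lemma not_clash_of_inv (I : GInv T t π fired) : ¬ t.Clash RIA := by
  rintro ⟨x, hx, hcl⟩
  rcases hcl with ⟨A, hA, hnA⟩ | ⟨n, S, C, hC, ys, hys, hneqq⟩
  · exact T.p1 (π x) _ (I.hlab x hx _ hA) (I.hlab x hx _ hnA)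
  · have hCL := I.hlab x hx _ hC
    have hcard := T.p9 (π x) n S C hCL
    have hf : ∀ i : Fin (n+1), (π x, π (ys i)) ∈ T.E S ∧ C ∈ T.L (π (ys i)) := fun i =>
      ⟨neighb_E I hx (hys i).1,
        I.hlab _ (CTree.neighb_mem hx (hys i).1) _ (hys i).2⟩
    have hinj : Function.Injective
        (fun i : Fin (n+1) => (⟨π (ys i), hf i⟩ : {s // (π x, s) ∈ T.E S ∧ C ∈ T.L s})) := by
      intro i j hij
      by_contra hne
      exact (I.hneq _ _ (hneqq i j hne)).2.2 (congrArg Subtype.val hij)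
    have hle : ((n + 1 : ℕ) : Cardinal) ≤ Cardinal.mk {s // (π x, s) ∈ T.E S ∧ C ∈ T.L s} := by
      calc ((n + 1 : ℕ) : Cardinal) = Cardinal.mk (Fin (n + 1)) := by simp
        _ ≤ _ := Cardinal.mk_le_of_injective hinj
    have := hle.trans hcard
    have h2 : (n : Cardinal) < ((n + 1 : ℕ) : Cardinal) := by
      exact_mod_cast Nat.lt_succ_self n
    exact absurd (lt_of_lt_of_le h2 this) (lt_irrefl _)

/-- The (bounded, strictly increasing) progress measure. -/
def Mval (D : DLConcept) (RIA : List (Role × Role)) (t : CTree) : ℕ :=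
  ((closF D RIA).card + 1) *
    (t.nodes.card + (t.nodes.filter (fun x => x ≠ t.root ∧ t.elb x = ∅)).card) +
  ∑ x ∈ t.nodes, (t.lab x).card

/-- Bound on the number of children. -/
def Gbd (D : DLConcept) (RIA : List (Role × Role)) : ℕ := (closF D RIA).sum cweight

/-- Bound on the number of nodes. -/
def Nbd (D : DLConcept) (RIA : List (Role × Role)) : ℕ :=
  ∑ d ∈ Finset.range (Bdep D RIA + 2), (Gbd D RIA) ^ d

lemma nodes_card_le (I : GInv T t π fired) : t.nodes.card ≤ Nbd D RIA := by
  classical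
  set B := Bdep D RIA
  set G := Gbd D RIA
  have hlevel : ∀ d : ℕ, (t.nodes.filter (fun x => t.depth x = d)).card ≤ G ^ d := by
    intro d
    induction d with
    | zero =>
        have hsub : t.nodes.filter (fun x => t.depth x = 0) ⊆ {t.root} := by
          intro x hx
          rw [Finset.mem_filter] at hx
          have := CTree.depth_spec hx.1
          rw [hx.2] at this
          simpa using this
        simpa using (Finset.card_le_card hsub)
    | succ d ih =>
        have hmaps : ∀ x ∈ t.nodes.filter (fun x => t.depth x = d + 1),
            t.parent x ∈ t.nodes.filter (fun x => t.depth x = d) := by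
          intro x hx
          rw [Finset.mem_filter] at hx ⊢
          have hxr : x ≠ t.root := by
            intro h
            rw [h, CTree.depth_root] at hx
            omega
          have hdp := CTree.depth_parent hx.1 hxr
          exact ⟨t.parent_mem x hx.1 hxr, by omega⟩
        have hfib : ∀ b ∈ t.nodes.filter (fun x => t.depth x = d),
            ((t.nodes.filter (fun x => t.depth x = d + 1)).filter
              (fun a => t.parent a = b)).card ≤ G := by
          intro b _
          have hsub : (t.nodes.filter (fun x => t.depth x = d + 1)).filter
              (fun a => t.parent a = b) ⊆ childset t b := by
            intro a ha
            simp only [Finset.mem_filter] at ha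
            refine Finset.mem_filter.mpr ⟨ha.1.1, ?_, ha.2⟩
            intro h
            rw [h, CTree.depth_root] at ha
            omega
          refine (Finset.card_le_card hsub).trans ((I.hchild b).trans ?_)
          exact Finset.sum_le_sum_of_subset (I.hfsub b)
        calc (t.nodes.filter (fun x => t.depth x = d + 1)).card
            ≤ G * (t.nodes.filter (fun x => t.depth x = d)).card :=
              Finset.card_le_mul_card_image_of_maps_to hmaps G hfib
          _ ≤ G * G ^ d := Nat.mul_le_mul_left G ih
          _ = G ^ (d + 1) := by ring
  have hcover : t.nodes ⊆ (Finset.range (B + 2)).biUnion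
      (fun d => t.nodes.filter (fun x => t.depth x = d)) := by
    intro x hx
    refine Finset.mem_biUnion.mpr ⟨t.depth x, ?_, Finset.mem_filter.mpr ⟨hx, rfl⟩⟩
    rw [Finset.mem_range]
    have := I.hdepth x hx
    omega
  calc t.nodes.card ≤ _ := Finset.card_le_card hcover
    _ ≤ ∑ d ∈ Finset.range (B + 2), (t.nodes.filter (fun x => t.depth x = d)).card :=
        Finset.card_biUnion_le
    _ ≤ ∑ d ∈ Finset.range (B + 2), G ^ d := Finset.sum_le_sum (fun d _ => hlevel d)

/-- Global bound on the measure. -/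
def MBd (D : DLConcept) (RIA : List (Role × Role)) : ℕ :=
  ((closF D RIA).card + 1) * (Nbd D RIA + Nbd D RIA) + Nbd D RIA * (closF D RIA).card

lemma Mval_le (I : GInv T t π fired) : Mval D RIA t ≤ MBd D RIA := by
  have h1 := nodes_card_le I
  have h2 : (t.nodes.filter (fun x => x ≠ t.root ∧ t.elb x = ∅)).card ≤ Nbd D RIA :=
    (Finset.card_le_card (Finset.filter_subset _ _)).trans h1
  have h3 : ∑ x ∈ t.nodes, (t.lab x).card ≤ t.nodes.card * (closF D RIA).card := by
    calc ∑ x ∈ t.nodes, (t.lab x).card ≤ ∑ _x ∈ t.nodes, (closF D RIA).card :=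
          Finset.sum_le_sum (fun x hx => Finset.card_le_card (I.hclos x hx))
      _ = t.nodes.card * (closF D RIA).card := by rw [Finset.sum_const, smul_eq_mul]
  unfold Mval MBd
  have h4 : t.nodes.card * (closF D RIA).card ≤ Nbd D RIA * (closF D RIA).card :=
    Nat.mul_le_mul_right _ h1
  have h5 := Nat.mul_le_mul_left ((closF D RIA).card + 1) (Nat.add_le_add h1 h2)
  omega

end Invariant

section Helpers

variable {Rp : Set ℕ} {RIA : List (Role × Role)} {D : DLConcept}
variable {T : Tableau Rp RIA D} {t t' : CTree} {π : ℕ → T.S} {fired : ℕ → Finset DLConcept}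

lemma depth_congr (hp : t'.parent = t.parent) (hr : t'.root = t.root) :
    t'.depth = t.depth := by
  funext x
  unfold CTree.depth
  rw [hp, hr]

lemma neq_irrefl (I : GInv T t π fired) (u : ℕ) : ¬ t.neq u u :=
  fun h => (I.hneq u u h).2.2 rfl

lemma emptyEdge_blocked {x : ℕ} (h : t.EmptyEdge x) : t.Blocked x :=
  ⟨x, Or.inl rfl, Or.inr h⟩

lemma not_emptyEdge_of_not_blocked {x : ℕ} (h : ¬ t.Blocked x) : ¬ t.EmptyEdge x :=
  fun he => h (emptyEdge_blocked he)

lemma indirectlyBlocked_of_emptyEdge {x : ℕ} (h : t.EmptyEdge x) : t.IndirectlyBlocked x :=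
  Or.inr h

/-- Monotone transfer of neighbourhood. -/
lemma neighb_mono (hn : t.nodes ⊆ t'.nodes) (hr : t'.root = t.root)
    (hp : ∀ z ∈ t.nodes, t'.parent z = t.parent z)
    (he : ∀ z ∈ t.nodes, t.elb z ⊆ t'.elb z)
    {S : Role} {x u : ℕ} (hx : x ∈ t.nodes) (h : t.RNeighb RIA S x u) :
    t'.RNeighb RIA S x u := by
  have hu : u ∈ t.nodes := CTree.neighb_mem hx h
  rcases h with ⟨⟨hu', hur, hpu⟩, S₀, hS₀, hsub⟩ | ⟨⟨hx', hxr, hpx⟩, S₀, hS₀, hsub⟩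
  · exact Or.inl ⟨⟨hn hu', hr ▸ hur, (hp u hu').trans hpu⟩, S₀, he u hu' hS₀, hsub⟩
  · exact Or.inr ⟨⟨hn hx', hr ▸ hxr, (hp x hx').trans hpx⟩, S₀, he x hx' hS₀, hsub⟩

/-- Monotone transfer of the witness condition. -/
lemma CWit_mono (hn : t.nodes ⊆ t'.nodes) (hr : t'.root = t.root)
    (hp : ∀ z ∈ t.nodes, t'.parent z = t.parent z)
    (hl : ∀ z ∈ t.nodes, t.lab z ⊆ t'.lab z)
    (he : ∀ z ∈ t.nodes, t.elb z ⊆ t'.elb z)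
    (hq : ∀ u v, t.neq u v → t'.neq u v)
    {x : ℕ} {C : DLConcept} (hx : x ∈ t.nodes) (h : CWit RIA t x C) :
    CWit RIA t' x C := by
  cases C with
  | ex S C' =>
      obtain ⟨u, hu, hCu⟩ := h
      exact ⟨u, neighb_mono hn hr hp he hx hu,
        hl u (CTree.neighb_mem hx hu) hCu⟩
  | atleast n S C' =>
      obtain ⟨zs, h1, h2⟩ := h
      refine ⟨zs, fun i => ⟨neighb_mono hn hr hp he hx (h1 i).1,
        hl _ (CTree.neighb_mem hx (h1 i).1) (h1 i).2⟩, fun i j hij => hq _ _ (h2 i j hij)⟩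
  | top => trivial
  | bot => trivial
  | atom a => trivial
  | neg A => trivial
  | and A B => trivial
  | or A B => trivial
  | all R A => trivial
  | atmost n R A => trivial

/-- Progress for rules that only enlarge a single node label. -/
lemma prog_label_update (I : GInv T t π fired) {w : ℕ} {Lnew : Finset DLConcept}
    (hw : w ∈ t.nodes)
    (hn : t'.nodes = t.nodes) (hr : t'.root = t.root) (hp : t'.parent = t.parent)
    (hl : t'.lab = Function.update t.lab w Lnew)
    (he : t'.elb = t.elb) (hq : t'.neq = t.neq)
    (hmono : t.lab w ⊆ Lnew) (hstrict : ¬ Lnew ⊆ t.lab w)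
    (hclosnew : Lnew ⊆ closF D RIA)
    (htab : ∀ C ∈ Lnew, C ∈ T.L (π w)) :
    GInv T t' π fired ∧ Mval D RIA t < Mval D RIA t' := by
  have hlab' : ∀ z, t'.lab z = if z = w then Lnew else t.lab z := by
    intro z; rw [hl, Function.update_apply]
  have hlmono : ∀ z ∈ t.nodes, t.lab z ⊆ t'.lab z := by
    intro z _
    rw [hlab' z]
    split
    · next hzw => rw [hzw]; exact hmono
    · exact Finset.Subset.refl _
  constructor
  · constructor
    · -- hlab
      intro x hx C hC
      rw [hn] at hx
      rw [hlab' x] at hC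
      split at hC
      · next hzw => subst hzw; exact htab C hC
      · exact I.hlab x hx C hC
    · -- hedge
      intro y hy hyr S₀ hS₀
      rw [hn] at hy
      rw [hr] at hyr
      rw [he] at hS₀
      rw [hp]
      exact I.hedge y hy hyr S₀ hS₀
    · -- hneq
      intro u v huv
      rw [hq] at huv
      rw [hn]
      exact I.hneq u v huv
    · -- hclos
      intro x hx
      rw [hn] at hx
      rw [hlab' x]
      split
      · exact hclosnew
      · exact I.hclos x hx
    · -- helb
      intro x hx
      rw [hn] at hx
      rw [he]
      exact I.helb x hx
    · -- hroot
      rw [hp, hr]; exact I.hroot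
    · -- hdepth
      intro x hx
      rw [hn] at hx
      rw [depth_congr hp hr]
      exact I.hdepth x hx
    · exact I.hfsub
    · -- hfdom
      intro x hx
      rw [hn] at hx
      exact I.hfdom x hx
    · -- hfwit
      intro x hx hee C hC
      rw [hn] at hx
      have hee' : ¬ t.EmptyEdge x := by
        intro hE
        exact hee ⟨hn ▸ hE.1, hr ▸ hE.2.1, he ▸ hE.2.2⟩
      exact CWit_mono (le_of_eq hn.symm) hr (fun z _ => by rw [hp]) hlmono
        (fun z _ => by rw [he]) (fun u v h => by rw [hq]; exact h) hx
        (I.hfwit x hx hee' C hC)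
    · -- hchild
      intro x
      have : childset t' x = childset t x := by
        unfold childset
        rw [hn, hr, hp]
      rw [this]
      exact I.hchild x
  · -- measure
    have hemp : t'.nodes.filter (fun x => x ≠ t'.root ∧ t'.elb x = ∅) =
        t.nodes.filter (fun x => x ≠ t.root ∧ t.elb x = ∅) := by
      rw [hn, hr, he]
    have hcardlt : (t.lab w).card < Lnew.card :=
      Finset.card_lt_card ⟨hmono, hstrict⟩
    have hsum : ∑ x ∈ t.nodes, (t.lab x).card < ∑ x ∈ t'.nodes, (t'.lab x).card := by
      rw [hn]
      rw [← Finset.add_sum_erase _ _ hw, ← Finset.add_sum_erase _ (fun x => (t'.lab x).card) hw]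
      have h1 : (t'.lab w).card = Lnew.card := by rw [hlab' w, if_pos rfl]
      have h2 : ∑ x ∈ t.nodes.erase w, (t'.lab x).card =
          ∑ x ∈ t.nodes.erase w, (t.lab x).card := by
        refine Finset.sum_congr rfl ?_
        intro x hx
        rw [hlab' x, if_neg (Finset.ne_of_mem_erase hx)]
      rw [h1, h2]
      omega
    unfold Mval
    rw [hemp, hn]
    rw [hn] at hsum
    omega

end Helpers

section ProgExists

variable {Rp : Set ℕ} {RIA : List (Role × Role)} {D : DLConcept}
variable {T : Tableau Rp RIA D} {t t' : CTree} {π : ℕ → T.S} {fired : ℕ → Finset DLConcept}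

lemma prog_exists (I : GInv T t π fired) {x y : ℕ} {S : Role} {C : DLConcept}
    (hx : x ∈ t.nodes) (hC : DLConcept.ex S C ∈ t.lab x)
    (hnb : ¬ t.Blocked x)
    (hnew : ¬ ∃ z, t.RNeighb RIA S x z ∧ C ∈ t.lab z)
    (hy : y ∉ t.nodes)
    (hn : t'.nodes = insert y t.nodes) (hr : t'.root = t.root)
    (hp : t'.parent = Function.update t.parent y x)
    (hl : t'.lab = Function.update t.lab y {C})
    (he : t'.elb = Function.update t.elb y {S})
    (hq : t'.neq = t.neq) :
    ∃ (π' : ℕ → T.S) (fired' : ℕ → Finset DLConcept),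
      GInv T t' π' fired' ∧ Mval D RIA t < Mval D RIA t' := by
  classical
  obtain ⟨s, hsE, hsC⟩ := T.p5 (π x) S C (I.hlab x hx _ hC)
  set π' := Function.update π y s with hπ'
  set fired' := Function.update fired x (insert (DLConcept.ex S C) (fired x)) with hf'
  have hxy : x ≠ y := fun h => hy (h ▸ hx)
  have hyroot : y ≠ t.root := fun h => hy (h ▸ t.root_mem)
  have hzny : ∀ z, z ∈ t.nodes → z ≠ y := fun z hz h => hy (by rw [← h]; exact hz)
  have hπold : ∀ z, z ∈ t.nodes → π' z = π z := fun z hz =>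
    Function.update_of_ne (hzny z hz) _ _
  have hlold : ∀ z, z ∈ t.nodes → t'.lab z = t.lab z := fun z hz => by
    rw [hl]; exact Function.update_of_ne (hzny z hz) _ _
  have heold : ∀ z, z ∈ t.nodes → t'.elb z = t.elb z := fun z hz => by
    rw [he]; exact Function.update_of_ne (hzny z hz) _ _
  have hpold : ∀ z, z ∈ t.nodes → t'.parent z = t.parent z := fun z hz => by
    rw [hp]; exact Function.update_of_ne (hzny z hz) _ _
  have hly : t'.lab y = {C} := by rw [hl]; simp
  have hey : t'.elb y = {S} := by rw [he]; simp
  have hpy : t'.parent y = x := by rw [hp]; simp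
  have hπy : π' y = s := by rw [hπ']; simp
  have hyn' : y ∈ t'.nodes := by rw [hn]; exact Finset.mem_insert_self _ _
  have hyr' : y ≠ t'.root := by rw [hr]; exact hyroot
  have hroot' : t'.parent t'.root = t'.root := by
    rw [hr, hpold _ t.root_mem, I.hroot]
  have hnee : ¬ t.EmptyEdge x := not_emptyEdge_of_not_blocked hnb
  have hnotfired : DLConcept.ex S C ∉ fired x := by
    intro hf
    exact hnew (I.hfwit x hx hnee _ hf)
  have hnsub : t.nodes ⊆ t'.nodes := by rw [hn]; exact Finset.subset_insert _ _
  have hwitnew : t'.RNeighb RIA S x y := by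
    refine Or.inl ⟨⟨hyn', hyr', hpy⟩, S, ?_, Relation.ReflTransGen.refl⟩
    rw [hey]; exact Finset.mem_singleton_self _
  refine ⟨π', fired', ?_, ?_⟩
  · constructor
    · -- hlab
      intro z hz C₀ hC₀
      rw [hn, Finset.mem_insert] at hz
      rcases hz with rfl | hz
      · rw [hly] at hC₀
        rw [Finset.mem_singleton] at hC₀
        rw [hπy, hC₀]
        exact hsC
      · rw [hlold z hz] at hC₀
        rw [hπold z hz]
        exact I.hlab z hz C₀ hC₀
    · -- hedge
      intro z hz hzr S₀ hS₀
      rw [hn, Finset.mem_insert] at hz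
      rcases hz with rfl | hz
      · rw [hey, Finset.mem_singleton] at hS₀
        rw [hpy, hπy, hπold x hx, hS₀]
        exact hsE
      · rw [heold z hz] at hS₀
        rw [hr] at hzr
        rw [hpold z hz, hπold z hz,
          hπold _ (t.parent_mem z hz hzr)]
        exact I.hedge z hz hzr S₀ hS₀
    · -- hneq
      intro u v huv
      rw [hq] at huv
      obtain ⟨hu, hv, hne⟩ := I.hneq u v huv
      exact ⟨hnsub hu, hnsub hv, by rw [hπold u hu, hπold v hv]; exact hne⟩
    · -- hclos
      intro z hz
      rw [hn, Finset.mem_insert] at hz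
      rcases hz with rfl | hz
      · rw [hly]
        simpa using closF_ex (I.hclos x hx hC)
      · rw [hlold z hz]; exact I.hclos z hz
    · -- helb
      intro z hz
      rw [hn, Finset.mem_insert] at hz
      rcases hz with rfl | hz
      · rw [hey]
        have hS : S ∈ RD D RIA := by
          have := closF_roles (I.hclos x hx hC)
          exact this (by rw [DLConcept.rolesOf]; exact Finset.mem_insert_self _ _)
        simpa using hS
      · rw [heold z hz]; exact I.helb z hz
    · -- hroot
      exact hroot'
    · -- hdepth
      intro z hz
      rw [hn, Finset.mem_insert] at hz
      have hdagree : ∀ w ∈ t.nodes, t'.depth w = t.depth w := fun w hw =>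
        CTree.depth_agree I.hroot hpold hr hw
      rcases hz with rfl | hz
      · have h1 := CTree.depth_parent hyn' hyr'
        rw [hpy] at h1
        have h2 : t.depth x ≤ Bdep D RIA :=
          depth_le_of_not_blocked I.hroot I.hclos I.helb hx hnb
        rw [h1, hdagree x hx]
        omega
      · rw [hdagree z hz]
        exact I.hdepth z hz
    · -- hfsub
      intro z
      rw [hf', Function.update_apply]
      split
      · exact Finset.insert_subset (I.hclos x hx hC) (I.hfsub x)
      · exact I.hfsub z
    · -- hfdom
      intro z hz
      rw [hn, Finset.mem_insert, not_or] at hz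
      rw [hf', Function.update_of_ne (fun h => (h ▸ hz.2) hx)]
      exact I.hfdom z hz.2
    · -- hfwit
      intro z hz hee C₀ hC₀
      rw [hn, Finset.mem_insert] at hz
      rcases hz with rfl | hz
      · rw [hf', Function.update_of_ne (Ne.symm hxy), I.hfdom _ hy] at hC₀
        simp at hC₀
      · have hee' : ¬ t.EmptyEdge z := by
          intro hE
          exact hee ⟨hnsub hE.1, by rw [hr]; exact hE.2.1, by rw [heold z hz]; exact hE.2.2⟩
        have hmono := fun (h : CWit RIA t z C₀) => CWit_mono hnsub hr hpold
          (fun w hw => (hlold w hw).symm ▸ Finset.Subset.refl _)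
          (fun w hw => (heold w hw).symm ▸ Finset.Subset.refl _)
          (fun u v h' => by rw [hq]; exact h') hz h
        by_cases hzx : z = x
        · subst hzx
          rw [hf', Function.update_self, Finset.mem_insert] at hC₀
          rcases hC₀ with rfl | hC₀
          · exact ⟨y, hwitnew, by rw [hly]; exact Finset.mem_singleton_self _⟩
          · exact hmono (I.hfwit z hz hee' C₀ hC₀)
        · rw [hf', Function.update_of_ne hzx] at hC₀
          exact hmono (I.hfwit z hz hee' C₀ hC₀)
    · -- hchild
      intro w
      have hysub : y ∉ childset t w := fun h => hy (Finset.mem_filter.mp h).1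
      by_cases hwx : w = x
      · subst hwx
        have hcs : childset t' w = insert y (childset t w) := by
          ext z
          simp only [childset, Finset.mem_filter, Finset.mem_insert, hn, hr]
          constructor
          · rintro ⟨rfl | hz, hzr, hpz⟩
            · exact Or.inl rfl
            · rw [hpold z hz] at hpz
              exact Or.inr ⟨hz, hzr, hpz⟩
          · rintro (rfl | ⟨hz, hzr, hpz⟩)
            · exact ⟨Or.inl rfl, hyroot, hpy⟩
            · exact ⟨Or.inr hz, hzr, by rw [hpold z hz]; exact hpz⟩
        rw [hcs, Finset.card_insert_of_notMem hysub, hf', Function.update_self,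
          Finset.sum_insert hnotfired]
        have h1 : (childset t w).card ≤ ∑ c ∈ fired w, cweight c := I.hchild w
        have h2 : cweight (DLConcept.ex S C) = 1 := rfl
        rw [h2]
        omega
      · have hcs : childset t' w = childset t w := by
          ext z
          simp only [childset, Finset.mem_filter, Finset.mem_insert, hn, hr]
          constructor
          · rintro ⟨rfl | hz, hzr, hpz⟩
            · rw [hpy] at hpz
              exact absurd hpz.symm hwx
            · rw [hpold z hz] at hpz
              exact ⟨hz, hzr, hpz⟩
          · rintro ⟨hz, hzr, hpz⟩
            exact ⟨Or.inr hz, hzr, by rw [hpold z hz]; exact hpz⟩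
        rw [hcs, hf', Function.update_of_ne hwx]
        exact I.hchild w
  · -- measure
    have hc1 : t'.nodes.card = t.nodes.card + 1 := by
      rw [hn, Finset.card_insert_of_notMem hy]
    have hemp : t'.nodes.filter (fun w => w ≠ t'.root ∧ t'.elb w = ∅) =
        t.nodes.filter (fun w => w ≠ t.root ∧ t.elb w = ∅) := by
      ext z
      simp only [Finset.mem_filter, hn, hr, Finset.mem_insert]
      constructor
      · rintro ⟨rfl | hz, hzr, hze⟩
        · rw [hey] at hze
          exact absurd hze (Finset.singleton_ne_empty _)
        · exact ⟨hz, hzr, by rw [heold z hz] at hze; exact hze⟩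
      · rintro ⟨hz, hzr, hze⟩
        exact ⟨Or.inr hz, hzr, by rw [heold z hz]; exact hze⟩
    have hsum : ∑ z ∈ t'.nodes, (t'.lab z).card = (∑ z ∈ t.nodes, (t.lab z).card) + 1 := by
      rw [hn, Finset.sum_insert hy, hly]
      have : ∑ z ∈ t.nodes, (t'.lab z).card = ∑ z ∈ t.nodes, (t.lab z).card :=
        Finset.sum_congr rfl (fun z hz => by rw [hlold z hz])
      rw [this, Finset.card_singleton]
      omega
    unfold Mval
    rw [hemp, hc1, hsum]
    have hA : ((closF D RIA).card + 1) *
        (t.nodes.card + 1 + (t.nodes.filter (fun w => w ≠ t.root ∧ t.elb w = ∅)).card) =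
        ((closF D RIA).card + 1) *
        (t.nodes.card + (t.nodes.filter (fun w => w ≠ t.root ∧ t.elb w = ∅)).card) +
        ((closF D RIA).card + 1) := by ring
    rw [hA]
    omega

end ProgExists

section ProgGeq

variable {Rp : Set ℕ} {RIA : List (Role × Role)} {D : DLConcept}
variable {T : Tableau Rp RIA D} {t t' : CTree} {π : ℕ → T.S} {fired : ℕ → Finset DLConcept}

lemma prog_geq (I : GInv T t π fired) {x : ℕ} {n : ℕ} {S : Role} {C : DLConcept}
    {ys : Fin n → ℕ}
    (hx : x ∈ t.nodes) (hC : DLConcept.atleast n S C ∈ t.lab x)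
    (hnb : ¬ t.Blocked x)
    (hnew : ¬ ∃ zs : Fin n → ℕ,
      (∀ i, t.RNeighb RIA S x (zs i) ∧ C ∈ t.lab (zs i)) ∧
      ∀ i j, i ≠ j → t.neq (zs i) (zs j))
    (hinj : Function.Injective ys) (hfresh : ∀ i, ys i ∉ t.nodes)
    (hn : t'.nodes = t.nodes ∪ Finset.image ys Finset.univ)
    (hr : t'.root = t.root)
    (hp1 : ∀ i, t'.parent (ys i) = x)
    (hp2 : ∀ z, (∀ i, z ≠ ys i) → t'.parent z = t.parent z)
    (hl1 : ∀ i, t'.lab (ys i) = {C})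
    (hl2 : ∀ z, (∀ i, z ≠ ys i) → t'.lab z = t.lab z)
    (he1 : ∀ i, t'.elb (ys i) = {S})
    (he2 : ∀ z, (∀ i, z ≠ ys i) → t'.elb z = t.elb z)
    (hq : ∀ u v, t'.neq u v ↔
      (t.neq u v ∨ ∃ i j, i ≠ j ∧ u = ys i ∧ v = ys j)) :
    ∃ (π' : ℕ → T.S) (fired' : ℕ → Finset DLConcept),
      GInv T t' π' fired' ∧ Mval D RIA t < Mval D RIA t' := by
  classical
  have hCL := I.hlab x hx _ hC
  have hcard := T.p10 (π x) n S C hCL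
  rw [← Cardinal.mk_fin n] at hcard
  obtain ⟨g⟩ := (Cardinal.le_def _ _).mp hcard
  have hn1 : 1 ≤ n := by
    rcases Nat.eq_zero_or_pos n with rfl | h
    · exact absurd ⟨Fin.elim0, fun i => i.elim0, fun i j _ => i.elim0⟩ hnew
    · exact h
  set π' : ℕ → T.S := fun w => if h : ∃ i, ys i = w then (g h.choose).1 else π w with hπ'
  set fired' := Function.update fired x (insert (DLConcept.atleast n S C) (fired x)) with hf'
  have hznys : ∀ z, z ∈ t.nodes → ∀ i, z ≠ ys i := by
    intro z hz i h
    exact hfresh i (h ▸ hz)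
  have hπnew : ∀ i, π' (ys i) = (g i).1 := by
    intro i
    have hex : ∃ j, ys j = ys i := ⟨i, rfl⟩
    rw [hπ']
    simp only
    rw [dif_pos hex]
    have : hex.choose = i := hinj hex.choose_spec
    rw [this]
  have hπold : ∀ z, z ∈ t.nodes → π' z = π z := by
    intro z hz
    rw [hπ']
    simp only
    rw [dif_neg]
    rintro ⟨i, rfl⟩
    exact hfresh i hz
  have hlold : ∀ z, z ∈ t.nodes → t'.lab z = t.lab z := fun z hz => hl2 z (hznys z hz)
  have heold : ∀ z, z ∈ t.nodes → t'.elb z = t.elb z := fun z hz => he2 z (hznys z hz)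
  have hpold : ∀ z, z ∈ t.nodes → t'.parent z = t.parent z := fun z hz => hp2 z (hznys z hz)
  have hxysne : ∀ i, x ≠ ys i := hznys x hx
  have hrootys : ∀ i, t.root ≠ ys i := hznys t.root t.root_mem
  have hnsub : t.nodes ⊆ t'.nodes := by rw [hn]; exact Finset.subset_union_left
  have hysn' : ∀ i, ys i ∈ t'.nodes := by
    intro i
    rw [hn]
    exact Finset.mem_union_right _ (Finset.mem_image_of_mem _ (Finset.mem_univ i))
  have hysr' : ∀ i, ys i ≠ t'.root := by
    intro i h
    rw [hr] at h
    exact hfresh i (h ▸ t.root_mem)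
  have hroot' : t'.parent t'.root = t'.root := by
    rw [hr, hpold _ t.root_mem, I.hroot]
  have hcase : ∀ z, z ∈ t'.nodes → z ∈ t.nodes ∨ ∃ i, z = ys i := by
    intro z hz
    rw [hn, Finset.mem_union] at hz
    rcases hz with hz | hz
    · exact Or.inl hz
    · obtain ⟨i, _, hi⟩ := Finset.mem_image.mp hz
      exact Or.inr ⟨i, hi.symm⟩
  have hnee : ¬ t.EmptyEdge x := not_emptyEdge_of_not_blocked hnb
  have hnotfired : DLConcept.atleast n S C ∉ fired x := by
    intro hf
    exact hnew (I.hfwit x hx hnee _ hf)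
  have hwitnew : ∀ i, t'.RNeighb RIA S x (ys i) := by
    intro i
    refine Or.inl ⟨⟨hysn' i, hysr' i, hp1 i⟩, S, ?_, Relation.ReflTransGen.refl⟩
    rw [he1 i]; exact Finset.mem_singleton_self _
  have hgval : ∀ i j : Fin n, (g i).1 = (g j).1 → i = j := by
    intro i j h
    exact g.injective (Subtype.ext h)
  refine ⟨π', fired', ?_, ?_⟩
  · constructor
    · -- hlab
      intro z hz C₀ hC₀
      rcases hcase z hz with hz' | ⟨i, rfl⟩
      · rw [hlold z hz'] at hC₀
        rw [hπold z hz']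
        exact I.hlab z hz' C₀ hC₀
      · rw [hl1 i, Finset.mem_singleton] at hC₀
        rw [hπnew i, hC₀]
        exact (g i).2.2
    · -- hedge
      intro z hz hzr S₀ hS₀
      rcases hcase z hz with hz' | ⟨i, rfl⟩
      · rw [heold z hz'] at hS₀
        rw [hr] at hzr
        rw [hpold z hz', hπold z hz', hπold _ (t.parent_mem z hz' hzr)]
        exact I.hedge z hz' hzr S₀ hS₀
      · rw [he1 i, Finset.mem_singleton] at hS₀
        rw [hp1 i, hπnew i, hπold x hx, hS₀]
        exact (g i).2.1
    · -- hneq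
      intro u v huv
      rw [hq] at huv
      rcases huv with huv | ⟨i, j, hij, rfl, rfl⟩
      · obtain ⟨hu, hv, hne⟩ := I.hneq u v huv
        exact ⟨hnsub hu, hnsub hv, by rw [hπold u hu, hπold v hv]; exact hne⟩
      · refine ⟨hysn' i, hysn' j, ?_⟩
        rw [hπnew i, hπnew j]
        intro h
        exact hij (hgval i j h)
    · -- hclos
      intro z hz
      rcases hcase z hz with hz' | ⟨i, rfl⟩
      · rw [hlold z hz']; exact I.hclos z hz'
      · rw [hl1 i]
        simpa using (closF_num (Or.inl (I.hclos x hx hC))).1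
    · -- helb
      intro z hz
      rcases hcase z hz with hz' | ⟨i, rfl⟩
      · rw [heold z hz']; exact I.helb z hz'
      · rw [he1 i]
        have hS : S ∈ RD D RIA := by
          have := closF_roles (I.hclos x hx hC)
          exact this (by rw [DLConcept.rolesOf]; exact Finset.mem_insert_self _ _)
        simpa using hS
    · -- hroot
      exact hroot'
    · -- hdepth
      intro z hz
      have hdagree : ∀ w ∈ t.nodes, t'.depth w = t.depth w := fun w hw =>
        CTree.depth_agree I.hroot hpold hr hw
      rcases hcase z hz with hz' | ⟨i, rfl⟩
      · rw [hdagree z hz']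
        exact I.hdepth z hz'
      · have h1 := CTree.depth_parent (hysn' i) (hysr' i)
        rw [hp1 i] at h1
        have h2 : t.depth x ≤ Bdep D RIA :=
          depth_le_of_not_blocked I.hroot I.hclos I.helb hx hnb
        rw [h1, hdagree x hx]
        omega
    · -- hfsub
      intro z
      rw [hf', Function.update_apply]
      split
      · exact Finset.insert_subset (I.hclos x hx hC) (I.hfsub x)
      · exact I.hfsub z
    · -- hfdom
      intro z hz
      have hz1 : z ∉ t.nodes := fun h => hz (hnsub h)
      rw [hf', Function.update_of_ne (fun h => hz1 (by rw [h]; exact hx))]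
      exact I.hfdom z hz1
    · -- hfwit
      intro z hz hee C₀ hC₀
      rcases hcase z hz with hz' | ⟨i, rfl⟩
      · have hee' : ¬ t.EmptyEdge z := by
          intro hE
          exact hee ⟨hnsub hE.1, by rw [hr]; exact hE.2.1, by rw [heold z hz']; exact hE.2.2⟩
        have hmono := fun (h : CWit RIA t z C₀) => CWit_mono hnsub hr hpold
          (fun w hw => (hlold w hw).symm ▸ Finset.Subset.refl _)
          (fun w hw => (heold w hw).symm ▸ Finset.Subset.refl _)
          (fun u v h' => (hq u v).mpr (Or.inl h')) hz' h
        by_cases hzx : z = x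
        · subst hzx
          rw [hf', Function.update_self, Finset.mem_insert] at hC₀
          rcases hC₀ with rfl | hC₀
          · refine ⟨ys, fun i => ⟨hwitnew i, by rw [hl1 i]; exact Finset.mem_singleton_self _⟩,
              fun i j hij => (hq _ _).mpr (Or.inr ⟨i, j, hij, rfl, rfl⟩)⟩
          · exact hmono (I.hfwit z hz' hee' C₀ hC₀)
        · rw [hf', Function.update_of_ne hzx] at hC₀
          exact hmono (I.hfwit z hz' hee' C₀ hC₀)
      · rw [hf', Function.update_of_ne (Ne.symm (hxysne i)), I.hfdom _ (hfresh i)] at hC₀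
        simp at hC₀
    · -- hchild
      intro w
      by_cases hwx : w = x
      · subst hwx
        have hcs : childset t' w = childset t w ∪ Finset.image ys Finset.univ := by
          ext z
          simp only [childset, Finset.mem_filter, Finset.mem_union, hn, hr]
          constructor
          · rintro ⟨hz1 | hz1, hzr, hpz⟩
            · rw [hpold z hz1] at hpz
              exact Or.inl ⟨hz1, hzr, hpz⟩
            · exact Or.inr hz1
          · rintro (⟨hz, hzr, hpz⟩ | hz)
            · exact ⟨Or.inl hz, hzr, by rw [hpold z hz]; exact hpz⟩
            · obtain ⟨i, _, rfl⟩ := Finset.mem_image.mp hz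
              exact ⟨Or.inr hz, Ne.symm (hrootys i), hp1 i⟩
        have hdis : Disjoint (childset t w) (Finset.image ys Finset.univ) := by
          rw [Finset.disjoint_right]
          intro z hz hz'
          obtain ⟨i, _, rfl⟩ := Finset.mem_image.mp hz
          exact hfresh i (Finset.mem_filter.mp hz').1
        have himg : (Finset.image ys Finset.univ).card = n := by
          rw [Finset.card_image_of_injective _ hinj, Finset.card_univ, Fintype.card_fin]
        rw [hcs, Finset.card_union_of_disjoint hdis, himg, hf', Function.update_self,
          Finset.sum_insert hnotfired]
        have h1 : (childset t w).card ≤ ∑ c ∈ fired w, cweight c := I.hchild w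
        have h2 : cweight (DLConcept.atleast n S C) = n := rfl
        rw [h2]
        omega
      · have hcs : childset t' w ⊆ childset t w := by
          intro z hz
          simp only [childset, Finset.mem_filter, hn, hr, Finset.mem_union] at hz
          obtain ⟨hz1 | hz1, hzr, hpz⟩ := hz
          · rw [hpold z hz1] at hpz
            exact Finset.mem_filter.mpr ⟨hz1, hzr, hpz⟩
          · obtain ⟨i, _, rfl⟩ := Finset.mem_image.mp hz1
            rw [hp1 i] at hpz
            exact absurd hpz.symm hwx
        refine (Finset.card_le_card hcs).trans ?_
        rw [hf', Function.update_of_ne hwx]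
        exact I.hchild w
  · -- measure
    have hdisn : Disjoint t.nodes (Finset.image ys Finset.univ) := by
      rw [Finset.disjoint_right]
      intro z hz hz'
      obtain ⟨i, _, rfl⟩ := Finset.mem_image.mp hz
      exact hfresh i hz'
    have himg : (Finset.image ys Finset.univ).card = n := by
      rw [Finset.card_image_of_injective _ hinj, Finset.card_univ, Fintype.card_fin]
    have hc1 : t'.nodes.card = t.nodes.card + n := by
      rw [hn, Finset.card_union_of_disjoint hdisn, himg]
    have hemp : t'.nodes.filter (fun w => w ≠ t'.root ∧ t'.elb w = ∅) =
        t.nodes.filter (fun w => w ≠ t.root ∧ t.elb w = ∅) := by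
      ext z
      simp only [Finset.mem_filter, hn, hr, Finset.mem_union]
      constructor
      · rintro ⟨hz | hz, hzr, hze⟩
        · exact ⟨hz, hzr, by rw [heold z hz] at hze; exact hze⟩
        · obtain ⟨i, _, rfl⟩ := Finset.mem_image.mp hz
          rw [he1 i] at hze
          exact absurd hze (Finset.singleton_ne_empty _)
      · rintro ⟨hz, hzr, hze⟩
        exact ⟨Or.inl hz, hzr, by rw [heold z hz]; exact hze⟩
    have hsum : ∑ z ∈ t'.nodes, (t'.lab z).card = (∑ z ∈ t.nodes, (t.lab z).card) + n := by
      rw [hn, Finset.sum_union hdisn]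
      have h1 : ∑ z ∈ t.nodes, (t'.lab z).card = ∑ z ∈ t.nodes, (t.lab z).card :=
        Finset.sum_congr rfl (fun z hz => by rw [hlold z hz])
      have h2 : ∑ z ∈ Finset.image ys Finset.univ, (t'.lab z).card = n := by
        rw [Finset.sum_image (fun i _ j _ h => hinj h)]
        have : ∀ i ∈ Finset.univ, (t'.lab (ys i)).card = 1 := fun i _ => by
          rw [hl1 i, Finset.card_singleton]
        rw [Finset.sum_congr rfl this, Finset.sum_const, smul_eq_mul, mul_one,
          Finset.card_univ, Fintype.card_fin]
      rw [h1, h2]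
    unfold Mval
    rw [hemp, hc1, hsum]
    have hA : ((closF D RIA).card + 1) *
        (t.nodes.card + n + (t.nodes.filter (fun w => w ≠ t.root ∧ t.elb w = ∅)).card) =
        ((closF D RIA).card + 1) *
        (t.nodes.card + (t.nodes.filter (fun w => w ≠ t.root ∧ t.elb w = ∅)).card) +
        ((closF D RIA).card + 1) * n := by ring
    rw [hA]
    have h1n : 1 ≤ ((closF D RIA).card + 1) * n :=
      Nat.one_le_iff_ne_zero.mpr (Nat.mul_ne_zero (Nat.succ_ne_zero _) (by omega))
    omega

end ProgGeq

section ProgLeq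

variable {Rp : Set ℕ} {RIA : List (Role × Role)} {D : DLConcept}
variable {T : Tableau Rp RIA D} {t t' : CTree} {π : ℕ → T.S} {fired : ℕ → Finset DLConcept}

/-- Transfer of a single neighbour witness across a merge step. -/
lemma leq_wit {x y z : ℕ}
    (hnodes : t'.nodes = t.nodes) (hroot2 : t'.root = t.root) (hpar : t'.parent = t.parent)
    (hpy : t.parent y = x)
    (hlabmono : ∀ v, t.lab v ⊆ t'.lab v)
    (hlaby : t'.lab y = t.lab y)
    (helbmono : ∀ v, v ≠ y → t.elb v ⊆ t'.elb v)
    (hlabyz : t.lab y ⊆ t'.lab z)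
    (hnww : ∀ S' S₀, S₀ ∈ t.elb y → SubRole RIA S₀ S' → t'.RNeighb RIA S' x z) :
    ∀ w, w ≠ y → ∀ (S' : Role) (u : ℕ), t.RNeighb RIA S' w u →
      ∃ u', t'.RNeighb RIA S' w u' ∧ t.lab u ⊆ t'.lab u' ∧ (u' = u ∨ (u = y ∧ u' = z)) := by
  intro w hwy S' u hu
  have hsucc : ∀ a b, t.Succ a b → t'.Succ a b := by
    intro a b ⟨h1, h2, h3⟩
    exact ⟨by rw [hnodes]; exact h1, by rw [hroot2]; exact h2, by rw [hpar]; exact h3⟩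
  by_cases huy : u = y
  · subst huy
    rcases hu with ⟨hs, S₀, hS₀, hsub⟩ | ⟨hs, S₀, hS₀, hsub⟩
    · have hwx : w = x := by rw [← hs.2.2]; exact hpy
      refine ⟨z, ?_, hlabyz, Or.inr ⟨rfl, rfl⟩⟩
      rw [hwx]
      exact hnww S' S₀ hS₀ hsub
    · exact ⟨u, Or.inr ⟨hsucc _ _ hs, S₀, helbmono w hwy hS₀, hsub⟩,
        by rw [hlaby], Or.inl rfl⟩
  · rcases hu with ⟨hs, S₀, hS₀, hsub⟩ | ⟨hs, S₀, hS₀, hsub⟩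
    · exact ⟨u, Or.inl ⟨hsucc _ _ hs, S₀, helbmono u huy hS₀, hsub⟩, hlabmono u, Or.inl rfl⟩
    · exact ⟨u, Or.inr ⟨hsucc _ _ hs, S₀, helbmono w hwy hS₀, hsub⟩, hlabmono u, Or.inl rfl⟩

/-- Transfer of the full witness condition across a merge step. -/
lemma leq_CWit {y z : ℕ}
    (hwit : ∀ w, w ≠ y → ∀ (S' : Role) (u : ℕ), t.RNeighb RIA S' w u →
      ∃ u', t'.RNeighb RIA S' w u' ∧ t.lab u ⊆ t'.lab u' ∧ (u' = u ∨ (u = y ∧ u' = z)))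
    (hqmono : ∀ u v, t.neq u v → t'.neq u v)
    (hqy : ∀ v, t.neq v y → t'.neq z v ∧ t'.neq v z)
    (hirr : ∀ u, ¬ t.neq u u) :
    ∀ w, w ≠ y → ∀ C₀, CWit RIA t w C₀ → CWit RIA t' w C₀ := by
  intro w hwy C₀ hC₀
  cases C₀ with
  | ex S' C' =>
      obtain ⟨u, hu, hCu⟩ := hC₀
      obtain ⟨u', h1, h2, _⟩ := hwit w hwy S' u hu
      exact ⟨u', h1, h2 hCu⟩
  | atleast m S' C' =>
      obtain ⟨zs, h1, h2⟩ := hC₀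
      choose zs' hn' hl' hd' using fun i => hwit w hwy S' (zs i) (h1 i).1
      refine ⟨zs', fun i => ⟨hn' i, hl' i (h1 i).2⟩, ?_⟩
      intro i j hij
      rcases hd' i with hi | ⟨hyi, hzi⟩ <;> rcases hd' j with hj | ⟨hyj, hzj⟩
      · rw [hi, hj]; exact hqmono _ _ (h2 i j hij)
      · rw [hi, hzj]
        exact (hqy (zs i) (by rw [← hyj]; exact h2 i j hij)).2
      · rw [hzi, hj]
        exact (hqy (zs j) (by rw [← hyi]; exact h2 j i (Ne.symm hij))).1
      · have h3 := h2 i j hij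
        rw [hyi, hyj] at h3
        exact absurd h3 (hirr y)
  | top => trivial
  | bot => trivial
  | atom a => trivial
  | neg A => trivial
  | and A B => trivial
  | or A B => trivial
  | all R A => trivial
  | atmost m R A => trivial

lemma prog_leq (I : GInv T t π fired) {x : ℕ} {n : ℕ} {S : Role} {C : DLConcept}
    (hx : x ∈ t.nodes) (hC : DLConcept.atmost n S C ∈ t.lab x)
    (hnib : ¬ t.IndirectlyBlocked x)
    (hcount : n < {w | t.RNeighb RIA S x w ∧ C ∈ t.lab w}.ncard) :
    ∃ (t' : CTree) (π' : ℕ → T.S) (fired' : ℕ → Finset DLConcept),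
      Step Rp RIA t t' ∧ GInv T t' π' fired' ∧ Mval D RIA t < Mval D RIA t' := by
  classical
  have hCL := I.hlab x hx _ hC
  have hp9 := T.p9 (π x) n S C hCL
  have hfinTh : Finite {s // (π x, s) ∈ T.E S ∧ C ∈ T.L s} :=
    Cardinal.lt_aleph0_iff_finite.mp (lt_of_le_of_lt hp9 (Cardinal.nat_lt_aleph0 n))
  have : Fintype {s // (π x, s) ∈ T.E S ∧ C ∈ T.L s} := Fintype.ofFinite _
  have hcardTh : Fintype.card {s // (π x, s) ∈ T.E S ∧ C ∈ T.L s} ≤ n := by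
    rw [Cardinal.mk_fintype] at hp9
    exact_mod_cast hp9
  have hsubn : {w | t.RNeighb RIA S x w ∧ C ∈ t.lab w} ⊆ ↑t.nodes := by
    intro w hw
    exact CTree.neighb_mem hx hw.1
  have hfin : {w | t.RNeighb RIA S x w ∧ C ∈ t.lab w}.Finite :=
    Set.Finite.subset t.nodes.finite_toSet hsubn
  have hFcard : n < hfin.toFinset.card := by
    rw [← Set.ncard_eq_toFinset_card _ hfin]
    exact hcount
  have hFmem : ∀ w, w ∈ hfin.toFinset ↔ t.RNeighb RIA S x w ∧ C ∈ t.lab w := by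
    intro w
    exact Set.Finite.mem_toFinset hfin
  have hcards : Fintype.card {s // (π x, s) ∈ T.E S ∧ C ∈ T.L s} <
      Fintype.card {w // w ∈ hfin.toFinset} := by
    rw [Fintype.card_coe]
    omega
  obtain ⟨a, b, hab, hfab⟩ := Fintype.exists_ne_map_eq_of_card_lt
    (fun w : {w // w ∈ hfin.toFinset} =>
      (⟨π w.1, neighb_E I hx ((hFmem w.1).mp w.2).1,
        I.hlab _ (CTree.neighb_mem hx ((hFmem w.1).mp w.2).1) _
          ((hFmem w.1).mp w.2).2⟩ : {s // (π x, s) ∈ T.E S ∧ C ∈ T.L s})) hcards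
  have hπab : π a.1 = π b.1 := congrArg Subtype.val hfab
  have habne : a.1 ≠ b.1 := fun h => hab (Subtype.ext h)
  have hPa := (hFmem a.1).mp a.2
  have hPb := (hFmem b.1).mp b.2
  have hancP : ∀ w, t.RNeighb RIA S x w → t.Anc w x → t.parent x = w := by
    intro w hw ha
    exact (CTree.neighb_anc_parent hw ha).2.2.1
  -- choose an ordered pair (y, z) with y not an ancestor
  obtain ⟨y, z, hyz, hπyz, hyanc, hPy, hPz⟩ :
      ∃ y z, y ≠ z ∧ π y = π z ∧ ¬ t.Anc y x ∧
        (t.RNeighb RIA S x y ∧ C ∈ t.lab y) ∧ (t.RNeighb RIA S x z ∧ C ∈ t.lab z) := by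
    by_cases hay : t.Anc a.1 x
    · refine ⟨b.1, a.1, Ne.symm habne, hπab.symm, ?_, hPb, hPa⟩
      intro hbz
      exact habne ((hancP a.1 hPa.1 hay).symm.trans (hancP b.1 hPb.1 hbz))
    · exact ⟨a.1, b.1, habne, hπab, hay, hPa, hPb⟩
  have hnq : ¬ t.neq y z := fun h => (I.hneq y z h).2.2 hπyz
  have hirr : ∀ u, ¬ t.neq u u := neq_irrefl I
  -- y is a successor of x
  obtain ⟨⟨hyn, hyr, hpy⟩, S₁, hS₁e, hS₁s⟩ := CTree.neighb_succ_of_not_anc hPy.1 hyanc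
  have hxny : x ≠ y := by
    intro h
    refine CTree.no_cycle hyn one_pos ?_ ?_
    · rw [Function.iterate_one, hpy, h]
    · intro j hj
      interval_cases j
      simpa using hyr
  have hzn : z ∈ t.nodes := CTree.neighb_mem hx hPz.1
  have hzy : z ≠ y := Ne.symm hyz
  by_cases hzanc : t.Anc z x
  · -- z is an ancestor of x : the ≤-rule merging into the predecessor
    have hxr : x ≠ t.root := (CTree.neighb_anc_parent hPz.1 hzanc).2.1
    have hpxz : t.parent x = z := (CTree.neighb_anc_parent hPz.1 hzanc).2.2.1
    have helbx : t.elb x ≠ ∅ := by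
      intro h
      exact hnib (Or.inr ⟨hx, hxr, h⟩)
    have hzx : z ≠ x := by
      intro h
      subst h
      exact CTree.anc_irrefl hzanc
    let t' : CTree :=
      { nodes := t.nodes, root := t.root, parent := t.parent,
        lab := Function.update t.lab z (t.lab z ∪ t.lab y),
        elb := Function.update (Function.update t.elb x (t.elb x ∪ (t.elb y).image Role.Inv)) y ∅,
        neq := fun u v => t.neq u v ∨ (t.neq u y ∧ v = z) ∨ (u = z ∧ t.neq v y),
        root_mem := t.root_mem, parent_mem := t.parent_mem, reach := t.reach,
        neq_symm := by
          intro u v h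
          rcases h with h | ⟨h1, h2⟩ | ⟨h1, h2⟩
          · exact Or.inl (t.neq_symm u v h)
          · exact Or.inr (Or.inr ⟨h2, h1⟩)
          · exact Or.inr (Or.inl ⟨h2, h1⟩) }
    have hpar' : t'.parent = t.parent := rfl
    have hroot'' : t'.root = t.root := rfl
    have hnodes' : t'.nodes = t.nodes := rfl
    have hlabz : t'.lab z = t.lab z ∪ t.lab y := Function.update_self _ _ _
    have hlabw : ∀ w, w ≠ z → t'.lab w = t.lab w := fun w hw => Function.update_of_ne hw _ _
    have hely : t'.elb y = ∅ := Function.update_self _ _ _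
    have helx : t'.elb x = t.elb x ∪ (t.elb y).image Role.Inv :=
      (Function.update_of_ne hxny _ _).trans (Function.update_self _ _ _)
    have helw : ∀ w, w ≠ x → w ≠ y → t'.elb w = t.elb w := fun w h1 h2 =>
      (Function.update_of_ne h2 _ _).trans (Function.update_of_ne h1 _ _)
    have hlabmono : ∀ v, t.lab v ⊆ t'.lab v := by
      intro v
      by_cases hv : v = z
      · rw [hv, hlabz]; exact Finset.subset_union_left
      · rw [hlabw v hv]
    have helbmono : ∀ v, v ≠ y → t.elb v ⊆ t'.elb v := by
      intro v hv
      by_cases hv2 : v = x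
      · rw [hv2, helx]; exact Finset.subset_union_left
      · rw [helw v hv2 hv]
    have hnww : ∀ S' S₀, S₀ ∈ t.elb y → SubRole RIA S₀ S' → t'.RNeighb RIA S' x z := by
      intro S' S₀ hS₀ hsub
      refine Or.inr ⟨⟨hx, hxr, hpxz⟩, S₀.Inv, ?_, SubRole.inv hsub⟩
      rw [helx]
      exact Finset.mem_union_right _ (Finset.mem_image_of_mem _ hS₀)
    have hwit := leq_wit (t := t) (t' := t') rfl rfl rfl hpy hlabmono (hlabw y hyz) helbmono
      (by rw [hlabz]; exact Finset.subset_union_right) hnww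
    have hqmono : ∀ u v, t.neq u v → t'.neq u v := fun u v h => Or.inl h
    have hqy : ∀ v, t.neq v y → t'.neq z v ∧ t'.neq v z := fun v h =>
      ⟨Or.inr (Or.inr ⟨rfl, h⟩), Or.inr (Or.inl ⟨h, rfl⟩)⟩
    refine ⟨t', π, fired, ?_, ?_, ?_⟩
    case _ =>
      exact Step.leqAnc t t' x y z n S C hx hC hnib hcount hPy.1 hPz.1 hPy.2 hPz.2 hyz hnq
        hyanc hzanc rfl rfl rfl hlabz hlabw helx hely helw (fun u v => Iff.rfl)
    case _ =>
      constructor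
      · intro w hw C₀ hC₀
        by_cases hwz : w = z
        · rw [hwz] at hC₀ ⊢
          rw [hlabz, Finset.mem_union] at hC₀
          rcases hC₀ with h | h
          · exact I.hlab z hzn C₀ h
          · have h2 := I.hlab y hyn C₀ h
            rwa [hπyz] at h2
        · rw [hlabw w hwz] at hC₀
          exact I.hlab w hw C₀ hC₀
      · intro w hw hwr S₀ hS₀
        rw [hpar']
        by_cases hwy2 : w = y
        · rw [hwy2, hely] at hS₀
          exact absurd hS₀ (Finset.notMem_empty _)
        · by_cases hwx : w = x
          · rw [hwx] at hS₀ ⊢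
            rw [helx, Finset.mem_union] at hS₀
            rcases hS₀ with h | h
            · exact I.hedge x hx hxr S₀ h
            · obtain ⟨S₁', hS₁'m, rfl⟩ := Finset.mem_image.mp h
              have h2 := I.hedge y hyn hyr S₁' hS₁'m
              rw [hpy] at h2
              have h3 := (T.p7 S₁' (π x) (π y)).mp h2
              rw [hπyz] at h3
              rw [hpxz]
              exact h3
          · rw [helw w hwx hwy2] at hS₀
            exact I.hedge w hw hwr S₀ hS₀
      · intro u v h
        have h' : t.neq u v ∨ (t.neq u y ∧ v = z) ∨ (u = z ∧ t.neq v y) := h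
        rcases h' with h' | ⟨h1, h2⟩ | ⟨h1, h2⟩
        · exact I.hneq u v h'
        · obtain ⟨hu, _, hne⟩ := I.hneq u y h1
          rw [h2]
          refine ⟨hu, hzn, ?_⟩
          rw [← hπyz]
          exact hne
        · obtain ⟨hv, _, hne⟩ := I.hneq v y h2
          rw [h1]
          refine ⟨hzn, hv, ?_⟩
          rw [← hπyz]
          exact hne.symm
      · intro w hw
        by_cases hwz : w = z
        · rw [hwz, hlabz]
          exact Finset.union_subset (I.hclos z hzn) (I.hclos y hyn)
        · rw [hlabw w hwz]
          exact I.hclos w hw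
      · intro w hw
        by_cases hwy2 : w = y
        · rw [hwy2, hely]
          exact Finset.empty_subset _
        · by_cases hwx : w = x
          · rw [hwx, helx]
            refine Finset.union_subset (I.helb x hx) ?_
            intro r hr
            obtain ⟨r₀, hr₀, rfl⟩ := Finset.mem_image.mp hr
            exact RD_inv (I.helb y hyn hr₀)
          · rw [helw w hwx hwy2]
            exact I.helb w hw
      · show t.parent t.root = t.root
        exact I.hroot
      · intro w hw
        rw [depth_congr hpar' hroot'']
        exact I.hdepth w hw
      · exact I.hfsub
      · exact I.hfdom
      · intro w hw hee C₀ hC₀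
        have hwny : w ≠ y := by
          intro hwyeq
          exact hee ⟨by rw [hwyeq]; exact hyn, by rw [hwyeq]; exact hyr,
            by rw [hwyeq]; exact hely⟩
        have heet : ¬ t.EmptyEdge w := by
          intro hE
          by_cases hwx : w = x
          · rw [hwx] at hE
            exact helbx hE.2.2
          · exact hee ⟨hE.1, hE.2.1, by rw [helw w hwx hwny]; exact hE.2.2⟩
        exact leq_CWit hwit hqmono hqy hirr w hwny C₀ (I.hfwit w hw heet C₀ hC₀)
      · intro w
        have hcs : childset t' w = childset t w := rfl
        rw [hcs]
        exact I.hchild w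
    case _ =>
      have hemp' : t'.nodes.filter (fun w => w ≠ t'.root ∧ t'.elb w = ∅) =
          insert y (t.nodes.filter (fun w => w ≠ t.root ∧ t.elb w = ∅)) := by
        ext w
        simp only [Finset.mem_filter, Finset.mem_insert]
        constructor
        · rintro ⟨hwmem, hwr, hwe⟩
          by_cases hwy2 : w = y
          · exact Or.inl hwy2
          · rw [show t'.elb w = _ from Function.update_of_ne hwy2 _ _] at hwe
            by_cases hwx : w = x
            · rw [hwx, Function.update_self] at hwe
              exact absurd (Finset.union_eq_empty.mp hwe).1 helbx
            · rw [Function.update_of_ne hwx] at hwe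
              exact Or.inr ⟨hwmem, hwr, hwe⟩
        · rintro (rfl | ⟨h1, h2, h3⟩)
          · exact ⟨hyn, hyr, Function.update_self _ _ _⟩
          · have hwy2 : w ≠ y := by
              intro hh
              rw [hh] at h3
              rw [h3] at hS₁e
              exact Finset.notMem_empty _ hS₁e
            have hwx : w ≠ x := by
              intro hh
              rw [hh] at h3
              exact helbx h3
            refine ⟨h1, h2, ?_⟩
            rw [show t'.elb w = _ from Function.update_of_ne hwy2 _ _, Function.update_of_ne hwx]
            exact h3
      have hynotin : y ∉ t.nodes.filter (fun w => w ≠ t.root ∧ t.elb w = ∅) := by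
        intro h
        rw [Finset.mem_filter] at h
        rw [h.2.2] at hS₁e
        exact Finset.notMem_empty _ hS₁e
      have hsum : ∑ w ∈ t.nodes, (t.lab w).card ≤ ∑ w ∈ t.nodes, (t'.lab w).card :=
        Finset.sum_le_sum (fun w _ => Finset.card_le_card (hlabmono w))
      unfold Mval
      rw [hemp', Finset.card_insert_of_notMem hynotin, hnodes']
      have hexp : ((closF D RIA).card + 1) * (t.nodes.card +
          ((t.nodes.filter (fun w => w ≠ t.root ∧ t.elb w = ∅)).card + 1)) =
          ((closF D RIA).card + 1) * (t.nodes.card +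
          (t.nodes.filter (fun w => w ≠ t.root ∧ t.elb w = ∅)).card) +
          ((closF D RIA).card + 1) := by ring
      rw [hexp]
      omega
  · -- z is a successor of x : the ordinary merge
    obtain ⟨⟨hzn', hzr, hpz⟩, S₂, hS₂e, _⟩ := CTree.neighb_succ_of_not_anc hPz.1 hzanc
    let t' : CTree :=
      { nodes := t.nodes, root := t.root, parent := t.parent,
        lab := Function.update t.lab z (t.lab z ∪ t.lab y),
        elb := Function.update (Function.update t.elb z (t.elb z ∪ t.elb y)) y ∅,
        neq := fun u v => t.neq u v ∨ (t.neq u y ∧ v = z) ∨ (u = z ∧ t.neq v y),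
        root_mem := t.root_mem, parent_mem := t.parent_mem, reach := t.reach,
        neq_symm := by
          intro u v h
          rcases h with h | ⟨h1, h2⟩ | ⟨h1, h2⟩
          · exact Or.inl (t.neq_symm u v h)
          · exact Or.inr (Or.inr ⟨h2, h1⟩)
          · exact Or.inr (Or.inl ⟨h2, h1⟩) }
    have hpar' : t'.parent = t.parent := rfl
    have hroot'' : t'.root = t.root := rfl
    have hnodes' : t'.nodes = t.nodes := rfl
    have hlabz : t'.lab z = t.lab z ∪ t.lab y := Function.update_self _ _ _
    have hlabw : ∀ w, w ≠ z → t'.lab w = t.lab w := fun w hw => Function.update_of_ne hw _ _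
    have hely : t'.elb y = ∅ := Function.update_self _ _ _
    have helz : t'.elb z = t.elb z ∪ t.elb y :=
      (Function.update_of_ne hzy _ _).trans (Function.update_self _ _ _)
    have helw : ∀ w, w ≠ y → w ≠ z → t'.elb w = t.elb w := fun w h1 h2 =>
      (Function.update_of_ne h1 _ _).trans (Function.update_of_ne h2 _ _)
    have hlabmono : ∀ v, t.lab v ⊆ t'.lab v := by
      intro v
      by_cases hv : v = z
      · rw [hv, hlabz]; exact Finset.subset_union_left
      · rw [hlabw v hv]
    have helbmono : ∀ v, v ≠ y → t.elb v ⊆ t'.elb v := by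
      intro v hv
      by_cases hv2 : v = z
      · rw [hv2, helz]; exact Finset.subset_union_left
      · rw [helw v hv hv2]
    have hnww : ∀ S' S₀, S₀ ∈ t.elb y → SubRole RIA S₀ S' → t'.RNeighb RIA S' x z := by
      intro S' S₀ hS₀ hsub
      refine Or.inl ⟨⟨hzn, hzr, hpz⟩, S₀, ?_, hsub⟩
      rw [helz]
      exact Finset.mem_union_right _ hS₀
    have hwit := leq_wit (t := t) (t' := t') rfl rfl rfl hpy hlabmono (hlabw y hyz) helbmono
      (by rw [hlabz]; exact Finset.subset_union_right) hnww
    have hqmono : ∀ u v, t.neq u v → t'.neq u v := fun u v h => Or.inl h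
    have hqy : ∀ v, t.neq v y → t'.neq z v ∧ t'.neq v z := fun v h =>
      ⟨Or.inr (Or.inr ⟨rfl, h⟩), Or.inr (Or.inl ⟨h, rfl⟩)⟩
    refine ⟨t', π, fired, ?_, ?_, ?_⟩
    case _ =>
      exact Step.leqSucc t t' x y z n S C hx hC hnib hcount hPy.1 hPz.1 hPy.2 hPz.2 hyz hnq
        hyanc hzanc rfl rfl rfl hlabz hlabw helz hely (fun w h1 h2 => helw w h2 h1)
        (fun u v => Iff.rfl)
    case _ =>
      constructor
      · intro w hw C₀ hC₀
        by_cases hwz : w = z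
        · rw [hwz] at hC₀ ⊢
          rw [hlabz, Finset.mem_union] at hC₀
          rcases hC₀ with h | h
          · exact I.hlab z hzn C₀ h
          · have h2 := I.hlab y hyn C₀ h
            rwa [hπyz] at h2
        · rw [hlabw w hwz] at hC₀
          exact I.hlab w hw C₀ hC₀
      · intro w hw hwr S₀ hS₀
        rw [hpar']
        by_cases hwy2 : w = y
        · rw [hwy2, hely] at hS₀
          exact absurd hS₀ (Finset.notMem_empty _)
        · by_cases hwz : w = z
          · rw [hwz] at hS₀ ⊢
            rw [helz, Finset.mem_union] at hS₀
            rcases hS₀ with h | h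
            · exact I.hedge z hzn hzr S₀ h
            · have h2 := I.hedge y hyn hyr S₀ h
              rw [hpy] at h2
              rw [hπyz] at h2
              rw [hpz]
              exact h2
          · rw [helw w hwy2 hwz] at hS₀
            exact I.hedge w hw hwr S₀ hS₀
      · intro u v h
        have h' : t.neq u v ∨ (t.neq u y ∧ v = z) ∨ (u = z ∧ t.neq v y) := h
        rcases h' with h' | ⟨h1, h2⟩ | ⟨h1, h2⟩
        · exact I.hneq u v h'
        · obtain ⟨hu, _, hne⟩ := I.hneq u y h1
          rw [h2]
          refine ⟨hu, hzn, ?_⟩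
          rw [← hπyz]
          exact hne
        · obtain ⟨hv, _, hne⟩ := I.hneq v y h2
          rw [h1]
          refine ⟨hzn, hv, ?_⟩
          rw [← hπyz]
          exact hne.symm
      · intro w hw
        by_cases hwz : w = z
        · rw [hwz, hlabz]
          exact Finset.union_subset (I.hclos z hzn) (I.hclos y hyn)
        · rw [hlabw w hwz]
          exact I.hclos w hw
      · intro w hw
        by_cases hwy2 : w = y
        · rw [hwy2, hely]
          exact Finset.empty_subset _
        · by_cases hwz : w = z
          · rw [hwz, helz]
            exact Finset.union_subset (I.helb z hzn) (I.helb y hyn)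
          · rw [helw w hwy2 hwz]
            exact I.helb w hw
      · show t.parent t.root = t.root
        exact I.hroot
      · intro w hw
        rw [depth_congr hpar' hroot'']
        exact I.hdepth w hw
      · exact I.hfsub
      · exact I.hfdom
      · intro w hw hee C₀ hC₀
        have hwny : w ≠ y := by
          intro hwyeq
          exact hee ⟨by rw [hwyeq]; exact hyn, by rw [hwyeq]; exact hyr,
            by rw [hwyeq]; exact hely⟩
        have heet : ¬ t.EmptyEdge w := by
          intro hE
          by_cases hwz : w = z
          · rw [hwz] at hE
            rw [hE.2.2] at hS₂e
            exact Finset.notMem_empty _ hS₂e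
          · exact hee ⟨hE.1, hE.2.1, by rw [helw w hwny hwz]; exact hE.2.2⟩
        exact leq_CWit hwit hqmono hqy hirr w hwny C₀ (I.hfwit w hw heet C₀ hC₀)
      · intro w
        have hcs : childset t' w = childset t w := rfl
        rw [hcs]
        exact I.hchild w
    case _ =>
      have hemp' : t'.nodes.filter (fun w => w ≠ t'.root ∧ t'.elb w = ∅) =
          insert y (t.nodes.filter (fun w => w ≠ t.root ∧ t.elb w = ∅)) := by
        ext w
        simp only [Finset.mem_filter, Finset.mem_insert]
        constructor
        · rintro ⟨hwmem, hwr, hwe⟩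
          by_cases hwy2 : w = y
          · exact Or.inl hwy2
          · rw [show t'.elb w = _ from Function.update_of_ne hwy2 _ _] at hwe
            by_cases hwz : w = z
            · rw [hwz, Function.update_self] at hwe
              rw [(Finset.union_eq_empty.mp hwe).1] at hS₂e
              exact absurd hS₂e (Finset.notMem_empty _)
            · rw [Function.update_of_ne hwz] at hwe
              exact Or.inr ⟨hwmem, hwr, hwe⟩
        · rintro (rfl | ⟨h1, h2, h3⟩)
          · exact ⟨hyn, hyr, Function.update_self _ _ _⟩
          · have hwy2 : w ≠ y := by
              intro hh
              rw [hh] at h3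
              rw [h3] at hS₁e
              exact Finset.notMem_empty _ hS₁e
            have hwz : w ≠ z := by
              intro hh
              rw [hh] at h3
              rw [h3] at hS₂e
              exact Finset.notMem_empty _ hS₂e
            refine ⟨h1, h2, ?_⟩
            rw [show t'.elb w = _ from Function.update_of_ne hwy2 _ _, Function.update_of_ne hwz]
            exact h3
      have hynotin : y ∉ t.nodes.filter (fun w => w ≠ t.root ∧ t.elb w = ∅) := by
        intro h
        rw [Finset.mem_filter] at h
        rw [h.2.2] at hS₁e
        exact Finset.notMem_empty _ hS₁e
      have hsum : ∑ w ∈ t.nodes, (t.lab w).card ≤ ∑ w ∈ t.nodes, (t'.lab w).card :=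
        Finset.sum_le_sum (fun w _ => Finset.card_le_card (hlabmono w))
      unfold Mval
      rw [hemp', Finset.card_insert_of_notMem hynotin, hnodes']
      have hexp : ((closF D RIA).card + 1) * (t.nodes.card +
          ((t.nodes.filter (fun w => w ≠ t.root ∧ t.elb w = ∅)).card + 1)) =
          ((closF D RIA).card + 1) * (t.nodes.card +
          (t.nodes.filter (fun w => w ≠ t.root ∧ t.elb w = ∅)).card) +
          ((closF D RIA).card + 1) := by ring
      rw [hexp]
      omega

end ProgLeq

section Master

variable {Rp : Set ℕ} {RIA : List (Role × Role)} {D : DLConcept}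
variable {T : Tableau Rp RIA D} {t : CTree} {π : ℕ → T.S} {fired : ℕ → Finset DLConcept}

/-- Whenever some rule is applicable, a guided rule application is possible. -/
lemma progress (I : GInv T t π fired) {t₀ : CTree} (hstep : Step Rp RIA t t₀) :
    ∃ (t' : CTree) (π' : ℕ → T.S) (fired' : ℕ → Finset DLConcept),
      Step Rp RIA t t' ∧ GInv T t' π' fired' ∧ Mval D RIA t < Mval D RIA t' := by
  classical
  cases hstep with
  | conj x C₁ C₂ hx hC hnib hnew hn hr hp hl he hq =>
      have hCc := I.hclos x hx hC
      have hstrict : ¬ (t.lab x ∪ {C₁, C₂} ⊆ t.lab x) := by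
        intro h
        exact hnew ((Finset.subset_union_right).trans h)
      have hclosnew : t.lab x ∪ {C₁, C₂} ⊆ closF D RIA := by
        refine Finset.union_subset (I.hclos x hx) ?_
        intro c hc
        rw [Finset.mem_insert, Finset.mem_singleton] at hc
        rcases hc with rfl | rfl
        · exact (closF_and hCc).1
        · exact (closF_and hCc).2
      have htab : ∀ C₀ ∈ t.lab x ∪ {C₁, C₂}, C₀ ∈ T.L (π x) := by
        intro c hc
        rw [Finset.mem_union] at hc
        rcases hc with hc | hc
        · exact I.hlab x hx c hc
        · have hp2 := T.p2 (π x) C₁ C₂ (I.hlab x hx _ hC)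
          rw [Finset.mem_insert, Finset.mem_singleton] at hc
          rcases hc with rfl | rfl
          · exact hp2.1
          · exact hp2.2
      obtain ⟨hI, hM⟩ := prog_label_update I hx hn hr hp hl he hq
        Finset.subset_union_left hstrict hclosnew htab
      exact ⟨t₀, π, fired, Step.conj t t₀ x C₁ C₂ hx hC hnib hnew hn hr hp hl he hq, hI, hM⟩
  | disj x C₁ C₂ E hx hC hnib hnew hE hn hr hp hl he hq =>
      have hCc := I.hclos x hx hC
      obtain ⟨E', hE'or, hE'L, hE'not⟩ :
          ∃ E', (E' = C₁ ∨ E' = C₂) ∧ E' ∈ T.L (π x) ∧ E' ∉ t.lab x := by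
        rcases T.p3 (π x) C₁ C₂ (I.hlab x hx _ hC) with h | h
        · exact ⟨C₁, Or.inl rfl, h, hnew.1⟩
        · exact ⟨C₂, Or.inr rfl, h, hnew.2⟩
      have hE'clos : E' ∈ closF D RIA := by
        rcases hE'or with rfl | rfl
        · exact (closF_or hCc).1
        · exact (closF_or hCc).2
      let t2 : CTree := { t with lab := Function.update t.lab x (insert E' (t.lab x)) }
      have hres := prog_label_update (t' := t2)
        I hx rfl rfl rfl rfl rfl rfl (Finset.subset_insert _ _)
        (fun h => hE'not (h (Finset.mem_insert_self _ _)))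
        (Finset.insert_subset hE'clos (I.hclos x hx))
        (fun c hc => by
          rw [Finset.mem_insert] at hc
          rcases hc with rfl | hc
          · exact hE'L
          · exact I.hlab x hx c hc)
      exact ⟨t2, π, fired,
        Step.disj t t2 x C₁ C₂ E' hx hC hnib hnew hE'or rfl rfl rfl rfl rfl rfl,
        hres.1, hres.2⟩
  | all x y S C hx hC hnib hng hnew hn hr hp hl he hq =>
      have hy := CTree.neighb_mem hx hng
      have htabC := T.p4 (π x) (π y) S C (I.hlab x hx _ hC) (neighb_E I hx hng)
      obtain ⟨hI, hM⟩ := prog_label_update I hy hn hr hp hl he hq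
        (Finset.subset_insert _ _) (fun h => hnew (h (Finset.mem_insert_self _ _)))
        (Finset.insert_subset (closF_all_body (I.hclos x hx hC)) (I.hclos y hy))
        (fun c hc => by
          rw [Finset.mem_insert] at hc
          rcases hc with rfl | hc
          · exact htabC
          · exact I.hlab y hy c hc)
      exact ⟨t₀, π, fired, Step.all t t₀ x y S C hx hC hnib hng hnew hn hr hp hl he hq, hI, hM⟩
  | allTrans x y R S C hx hC hnib htr hsub hng hnew hn hr hp hl he hq =>
      have hy := CTree.neighb_mem hx hng
      have htabC := T.p6 (π x) (π y) R S C (I.hlab x hx _ hC) hsub htr (neighb_E I hx hng)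
      have hRRD : R ∈ RD D RIA := by
        rcases subRole_mem_RD (D := D) hsub with rfl | h
        · exact closF_roles (I.hclos x hx hC)
            (by rw [DLConcept.rolesOf]; exact Finset.mem_insert_self _ _)
        · exact h
      obtain ⟨hI, hM⟩ := prog_label_update I hy hn hr hp hl he hq
        (Finset.subset_insert _ _) (fun h => hnew (h (Finset.mem_insert_self _ _)))
        (Finset.insert_subset (closF_all_role (I.hclos x hx hC) hRRD) (I.hclos y hy))
        (fun c hc => by
          rw [Finset.mem_insert] at hc
          rcases hc with rfl | hc
          · exact htabC
          · exact I.hlab y hy c hc)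
      exact ⟨t₀, π, fired, Step.allTrans t t₀ x y R S C hx hC hnib htr hsub hng hnew
        hn hr hp hl he hq, hI, hM⟩
  | choose x y n S C E hx hC hnib hng hnew hE hn hr hp hl he hq =>
      have hy := CTree.neighb_mem hx hng
      have hCL' : DLConcept.atleast n S C ∈ T.L (π x) ∨ DLConcept.atmost n S C ∈ T.L (π x) := by
        rcases hC with h | h
        · exact Or.inl (I.hlab x hx _ h)
        · exact Or.inr (I.hlab x hx _ h)
      have hclosC : C ∈ closF D RIA ∧ C.nnfNeg ∈ closF D RIA := by
        refine closF_num (n := n) (S := S) ?_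
        rcases hC with h | h
        · exact Or.inl (I.hclos x hx h)
        · exact Or.inr (I.hclos x hx h)
      obtain ⟨E', hE'or, hE'L, hE'not, hE'clos⟩ :
          ∃ E', (E' = C ∨ E' = C.nnfNeg) ∧ E' ∈ T.L (π y) ∧ E' ∉ t.lab y ∧
            E' ∈ closF D RIA := by
        rcases T.p11 (π x) (π y) n S C hCL' (neighb_E I hx hng) with h | h
        · exact ⟨C, Or.inl rfl, h, hnew.1, hclosC.1⟩
        · exact ⟨C.nnfNeg, Or.inr rfl, h, hnew.2, hclosC.2⟩
      let t2 : CTree := { t with lab := Function.update t.lab y (insert E' (t.lab y)) }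
      have hres := prog_label_update (t' := t2)
        I hy rfl rfl rfl rfl rfl rfl (Finset.subset_insert _ _)
        (fun h => hE'not (h (Finset.mem_insert_self _ _)))
        (Finset.insert_subset hE'clos (I.hclos y hy))
        (fun c hc => by
          rw [Finset.mem_insert] at hc
          rcases hc with rfl | hc
          · exact hE'L
          · exact I.hlab y hy c hc)
      exact ⟨t2, π, fired,
        Step.choose t t2 x y n S C E' hx hC hnib hng hnew hE'or rfl rfl rfl rfl rfl rfl,
        hres.1, hres.2⟩
  | exists_ x y S C hx hC hnb hnew hy hn hr hp hl he hq =>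
      obtain ⟨π', fired', hI, hM⟩ := prog_exists I hx hC hnb hnew hy hn hr hp hl he hq
      exact ⟨t₀, π', fired',
        Step.exists_ t t₀ x y S C hx hC hnb hnew hy hn hr hp hl he hq, hI, hM⟩
  | geq x n S C ys hx hC hnb hnew hinj hfresh hn hr hp1 hp2 hl1 hl2 he1 he2 hq =>
      obtain ⟨π', fired', hI, hM⟩ := prog_geq I hx hC hnb hnew hinj hfresh hn hr
        hp1 hp2 hl1 hl2 he1 he2 hq
      exact ⟨t₀, π', fired', Step.geq t t₀ x n S C ys hx hC hnb hnew hinj hfresh hn hr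
        hp1 hp2 hl1 hl2 he1 he2 hq, hI, hM⟩
  | leqSucc x y z n S C hx hC hnib hcount hy hz hCy hCz hyz hnq hyanc hzanc hn hr hp
      hlz hlo hez hey heo hq =>
      exact prog_leq I hx hC hnib hcount
  | leqAnc x y z n S C hx hC hnib hcount hy hz hCy hCz hyz hnq hyanc hzanc hn hr hp
      hlz hlo hex hey heo hq =>
      exact prog_leq I hx hC hnib hcount

/-- Reaching a complete clash-free tree by well-founded recursion on the measure. -/
lemma main_rec (T : Tableau Rp RIA D) :
    ∀ (k : ℕ) (t : CTree) (π : ℕ → T.S) (fired : ℕ → Finset DLConcept),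
      GInv T t π fired → MBd D RIA + 1 - Mval D RIA t ≤ k →
      ∃ ts : CTree, Relation.ReflTransGen (Step Rp RIA) t ts ∧
        Complete Rp RIA ts ∧ ¬ ts.Clash RIA := by
  intro k
  induction k with
  | zero =>
      intro t π fired I hk
      have := Mval_le I
      omega
  | succ k ih =>
      intro t π fired I hk
      by_cases hc : ∃ t₀, Step Rp RIA t t₀
      · obtain ⟨t₀, hst⟩ := hc
        obtain ⟨t', π', fired', hs, hI, hM⟩ := progress I hst
        have hM' := Mval_le hI
        obtain ⟨ts, h1, h2, h3⟩ := ih t' π' fired' hI (by omega)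
        exact ⟨ts, Relation.ReflTransGen.head hs h1, h2, h3⟩
      · exact ⟨t, Relation.ReflTransGen.refl, hc, not_clash_of_inv I⟩

/-- The initial completion tree satisfies the invariant. -/
lemma init_inv (T : Tableau Rp RIA D) :
    ∃ π : ℕ → T.S, GInv T (initTree D) π (fun _ => ∅) := by
  obtain ⟨s₀, hs₀⟩ := T.root
  have hmem : ∀ x, x ∈ (initTree D).nodes → x = 0 := by
    intro x hx
    simpa [initTree] using hx
  refine ⟨fun _ => s₀, ?_⟩
  constructor
  · intro x hx C hC
    have hx0 := hmem x hx
    subst hx0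
    simp [initTree] at hC
    rw [hC]
    exact hs₀
  · intro y hy hyr
    exact absurd (hmem y hy) hyr
  · intro u v huv
    exact absurd huv (by simp [initTree])
  · intro x hx
    have hx0 := hmem x hx
    subst hx0
    intro C hC
    simp [initTree] at hC
    rw [hC]
    exact D_mem_closF
  · intro x hx
    simp [initTree]
  · rfl
  · intro x hx
    have hx0 := hmem x hx
    subst hx0
    have : (initTree D).depth 0 = 0 := CTree.depth_root
    omega
  · intro x
    exact Finset.empty_subset _
  · intro x _
    rfl
  · intro x _ _ C hC
    exact absurd hC (Finset.notMem_empty _)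
  · intro x
    have hempty : childset (initTree D) x = ∅ := by
      ext z
      simp only [childset, Finset.mem_filter, Finset.notMem_empty, iff_false, not_and]
      intro hz
      have := hmem z hz
      subst this
      intro h
      exact absurd rfl h
    rw [hempty]
    simp

end Master
/-- **Completeness.** If a SHIQ-concept `D` in NNF has a tableau
w.r.t. `R⁺`, then the expansion rules can be applied to the initial completion
tree for `D` so that they yield a complete and clash-free completion tree. -/
theorem shiq_algorithm_complete (Rp : Set ℕ) (RIA : List (Role × Role))
    (D : DLConcept) (hNNF : D.IsNNF) (hSHIQ : D.IsSHIQ Rp RIA)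
    (h : Nonempty (Tableau Rp RIA D)) :
    ∃ t : CTree, Relation.ReflTransGen (Step Rp RIA) (initTree D) t ∧
      Complete Rp RIA t ∧ ¬ t.Clash RIA := by
  obtain ⟨T⟩ := h
  obtain ⟨π, I⟩ := init_inv T
  exact main_rec T (MBd D RIA + 1) (initTree D) π _ I (by omega)
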